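/- There is no finite cubic girth-regular graph of girth 4 whose signature (a, b, c), a ≤ b ≤ c, has c = 3; in particular, the signatures (1, 2, 3) and (2, 3, 3) do not occur among cubic girth-regular graphs of girth 4, and the signature (2, 3, 3) does not occur among cubic girth-regular graphs of girth 5. -/

import Mathlib

open SimpleGraph

/-- `s` is the edge set of some cycle of length `g` in `G`. -/
def IsGirthCycleEdgeSet {V : Type*} (G : SimpleGraph V) (g : ℕ) (s : Set (Sym2 V)) : Prop :=
  ∃ (u : V) (w : G.Walk u u), w.IsCycle ∧ w.length = g ∧ s = {e | e ∈ w.edges}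

/-- The number of cycles of length `g` in `G` that contain the edge `e`. -/
noncomputable def girthCycleCount {V : Type*} (G : SimpleGraph V) (g : ℕ) (e : Sym2 V) : ℕ :=
  Set.ncard {s : Set (Sym2 V) | IsGirthCycleEdgeSet G g s ∧ e ∈ s}

/-- The multiset of the numbers of `g`-cycles through the edges incident to `v`. -/
noncomputable def vertexSignature {V : Type*} [Fintype V] (G : SimpleGraph V) (g : ℕ)
    (v : V) : Multiset ℕ :=
  ((G.neighborSet v).toFinite.toFinset.val).map fun u => girthCycleCount G g s(v, u)


namespace Stmt18

open scoped Classical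

variable {V : Type*}


lemma length_rotate [DecidableEq V] {G : SimpleGraph V} {v u : V} (c : G.Walk v v)
    (h : u ∈ c.support) : (c.rotate u h).length = c.length := by
  have := (c.rotate_edges u h).perm.length_eq
  simpa [Walk.length_edges] using this

def P4 (G : SimpleGraph V) (u v : V) : Set (V × V) :=
  {pq | G.Adj u pq.1 ∧ G.Adj pq.1 pq.2 ∧ G.Adj pq.2 v ∧ pq.1 ≠ v ∧ pq.2 ≠ u}

def F4 (u v : V) (pq : V × V) : Set (Sym2 V) :=
  {s(u, pq.1), s(pq.1, pq.2), s(pq.2, v), s(v, u)}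

lemma nodup4 {a b c u : V} (h : ([a, b, c, u] : List V).Nodup) :
    a ≠ b ∧ a ≠ c ∧ a ≠ u ∧ b ≠ c ∧ b ≠ u ∧ c ≠ u := by
  simp only [List.nodup_cons, List.mem_cons, List.mem_singleton, List.not_mem_nil,
    not_or, List.nodup_nil] at h
  tauto

lemma key4 {G : SimpleGraph V} {u v : V} (huv : G.Adj u v) (w : G.Walk u u)
    (hc : w.IsCycle) (hl : w.length = 4) (he : s(u,v) ∈ w.edges) :
    ∃ pq ∈ P4 G u v, {e : Sym2 V | e ∈ w.edges} = F4 u v pq := by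
  cases w with
  | nil => simp at hl
  | cons h1 w =>
  rename_i a
  cases w with
  | nil => simp at hl
  | cons h2 w =>
  rename_i b
  cases w with
  | nil => simp at hl
  | cons h3 w =>
  rename_i c
  cases w with
  | nil => simp at hl
  | cons h4 w =>
  rename_i d
  cases w with
  | cons h5 w => simp [Walk.length_cons] at hl
  | nil =>
  have hnd : ([a, b, c, u] : List V).Nodup := by
    have := hc.support_nodup
    simpa [Walk.support_cons] using this
  obtain ⟨hab, hac, hau, hbc, hbu, hcu⟩ := nodup4 hnd
  have hsetw : {e : Sym2 V | e ∈ (Walk.cons h1 (Walk.cons h2 (Walk.cons h3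
      (Walk.cons h4 Walk.nil)))).edges} = ({s(u,a), s(a,b), s(b,c), s(c,u)} : Set (Sym2 V)) := by
    ext e; simp [Walk.edges_cons]
  simp only [Walk.edges_cons, Walk.edges_nil, List.mem_cons, List.not_mem_nil, or_false] at he
  rcases he with h | h | h | h
  · rw [Sym2.eq_iff] at h
    have hva : v = a := by
      rcases h with ⟨-, h⟩ | ⟨h', -⟩
      · exact h
      · exact absurd h'.symm hau
    subst hva
    refine ⟨(c, b), ⟨h4.symm, h3.symm, h2.symm, fun h => hac h.symm, hbu⟩, ?_⟩
    rw [hsetw]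
    ext e
    simp only [F4, Set.mem_insert_iff, Set.mem_singleton_iff]
    constructor
    · rintro (rfl | rfl | rfl | rfl) <;> simp [Sym2.eq_iff]
    · rintro (rfl | rfl | rfl | rfl) <;> simp [Sym2.eq_iff]
  · rw [Sym2.eq_iff] at h
    rcases h with ⟨h', -⟩ | ⟨h', -⟩
    · exact absurd h'.symm hau
    · exact absurd h'.symm hbu
  · rw [Sym2.eq_iff] at h
    rcases h with ⟨h', -⟩ | ⟨h', -⟩
    · exact absurd h'.symm hbu
    · exact absurd h'.symm hcu
  · rw [Sym2.eq_iff] at h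
    have hvc : v = c := by
      rcases h with ⟨h', -⟩ | ⟨-, h⟩
      · exact absurd h'.symm hcu
      · exact h
    subst hvc
    exact ⟨(a, b), ⟨h1, h2, h3, hac, hbu⟩, hsetw⟩

lemma count4 {G : SimpleGraph V} {u v : V} (huv : G.Adj u v) :
    girthCycleCount G 4 s(u, v) = (P4 G u v).ncard := by
  classical
  have himg : {s : Set (Sym2 V) | IsGirthCycleEdgeSet G 4 s ∧ s(u,v) ∈ s}
      = F4 u v '' P4 G u v := by
    ext s
    constructor
    · rintro ⟨⟨w0, w, hc, hl, rfl⟩, he⟩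
      simp only [Set.mem_setOf_eq] at he
      have hu : u ∈ w.support := w.fst_mem_support_of_mem_edges he
      have hc' : (w.rotate u hu).IsCycle := hc.rotate hu
      have hl' : (w.rotate u hu).length = 4 := by rw [length_rotate]; exact hl
      have he' : s(u,v) ∈ (w.rotate u hu).edges := (w.rotate_edges u hu).mem_iff.mpr he
      obtain ⟨pq, hpq, hset⟩ := key4 huv (w.rotate u hu) hc' hl' he'
      refine ⟨pq, hpq, ?_⟩
      rw [← hset]
      ext e
      simp only [Set.mem_setOf_eq]
      exact (w.rotate_edges u hu).mem_iff
    · rintro ⟨⟨p, q⟩, ⟨h1, h2, h3, h4, h5⟩, rfl⟩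
      simp only at h1 h2 h3 h4 h5
      refine ⟨⟨u, Walk.cons h1 (Walk.cons h2 (Walk.cons h3 (Walk.cons huv.symm Walk.nil))),
        ?_, by simp, ?_⟩, ?_⟩
      · rw [Walk.isCycle_def]
        refine ⟨⟨?_⟩, by simp, ?_⟩
        · simp [Sym2.eq_iff, h1.ne, h1.ne', h2.ne, h2.ne', h3.ne, h3.ne', huv.ne, huv.ne',
            h4, h5, Ne.symm h4, Ne.symm h5]
        · simp [Walk.support_cons, h1.ne', h2.ne, h3.ne, huv.ne', h4, h5, Ne.symm h4,
            Ne.symm h5, h2.ne', h3.ne']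
      · ext e; simp [F4, Walk.edges_cons]
      · simp only [Set.mem_setOf_eq, F4, Set.mem_insert_iff, Set.mem_singleton_iff]
        simp [Sym2.eq_iff]
  rw [girthCycleCount, himg, Set.ncard_image_of_injOn]
  rintro ⟨p, q⟩ hpq ⟨p', q'⟩ hpq' heq
  obtain ⟨h1, h2, h3, h4, h5⟩ := hpq
  obtain ⟨h1', h2', h3', h4', h5'⟩ := hpq'
  simp only at h1 h2 h3 h4 h5 h1' h2' h3' h4' h5'
  have hp : p' = p := by
    have hm : s(u, p') ∈ F4 u v (p, q) := by
      rw [heq]; simp [F4]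
    simp only [F4, Set.mem_insert_iff, Set.mem_singleton_iff] at hm
    simp [Sym2.eq_iff, h1.ne, huv.ne, Ne.symm h5, h4'] at hm
    exact hm
  have hq : q' = q := by
    have hm : s(q', v) ∈ F4 u v (p, q) := by
      rw [heq]; simp [F4]
    simp only [F4, Set.mem_insert_iff, Set.mem_singleton_iff] at hm
    simp [Sym2.eq_iff, h5', huv.ne', h3.ne', Ne.symm h4] at hm
    exact hm
  subst hp; subst hq; rfl


def P5 (G : SimpleGraph V) (u v : V) : Set (V × V × V) :=
  {t | G.Adj u t.1 ∧ G.Adj t.1 t.2.1 ∧ G.Adj t.2.1 t.2.2 ∧ G.Adj t.2.2 v ∧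
    t.1 ≠ v ∧ t.2.2 ≠ u ∧ t.2.1 ≠ u ∧ t.2.1 ≠ v ∧ t.1 ≠ t.2.2}

def F5 (u v : V) (t : V × V × V) : Set (Sym2 V) :=
  {s(u, t.1), s(t.1, t.2.1), s(t.2.1, t.2.2), s(t.2.2, v), s(v, u)}

lemma nodup5 {a b c d u : V} (h : ([a, b, c, d, u] : List V).Nodup) :
    a ≠ b ∧ a ≠ c ∧ a ≠ d ∧ a ≠ u ∧ b ≠ c ∧ b ≠ d ∧ b ≠ u ∧ c ≠ d ∧ c ≠ u ∧ d ≠ u := by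
  simp only [List.nodup_cons, List.mem_cons, List.mem_singleton, List.not_mem_nil,
    not_or, List.nodup_nil] at h
  tauto

lemma key5 {G : SimpleGraph V} {u v : V} (huv : G.Adj u v) (w : G.Walk u u)
    (hc : w.IsCycle) (hl : w.length = 5) (he : s(u,v) ∈ w.edges) :
    ∃ t ∈ P5 G u v, {e : Sym2 V | e ∈ w.edges} = F5 u v t := by
  cases w with
  | nil => simp at hl
  | cons h1 w =>
  rename_i a
  cases w with
  | nil => simp at hl
  | cons h2 w =>
  rename_i b
  cases w with
  | nil => simp at hl
  | cons h3 w =>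
  rename_i c
  cases w with
  | nil => simp at hl
  | cons h4 w =>
  rename_i d
  cases w with
  | nil => simp at hl
  | cons h5 w =>
  rename_i e'
  cases w with
  | cons h6 w => simp [Walk.length_cons] at hl
  | nil =>
  have hnd : ([a, b, c, d, u] : List V).Nodup := by
    have := hc.support_nodup
    simpa [Walk.support_cons] using this
  obtain ⟨hab, hac, had, hau, hbc, hbd, hbu, hcd, hcu, hdu⟩ := nodup5 hnd
  have hsetw : {e : Sym2 V | e ∈ (Walk.cons h1 (Walk.cons h2 (Walk.cons h3
      (Walk.cons h4 (Walk.cons h5 Walk.nil))))).edges}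
      = ({s(u,a), s(a,b), s(b,c), s(c,d), s(d,u)} : Set (Sym2 V)) := by
    ext e; simp [Walk.edges_cons]
  simp only [Walk.edges_cons, Walk.edges_nil, List.mem_cons, List.not_mem_nil, or_false] at he
  rcases he with h | h | h | h | h
  · rw [Sym2.eq_iff] at h
    have hva : v = a := by
      rcases h with ⟨-, h⟩ | ⟨h', -⟩
      · exact h
      · exact absurd h'.symm hau
    subst hva
    refine ⟨(d, c, b), ⟨h5.symm, h4.symm, h3.symm, h2.symm, fun h => had h.symm, hbu,
      hcu, fun h => hac h.symm, fun h => hbd h.symm⟩, ?_⟩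
    rw [hsetw]
    ext e
    simp only [F5, Set.mem_insert_iff, Set.mem_singleton_iff]
    constructor
    · rintro (rfl | rfl | rfl | rfl | rfl) <;> simp [Sym2.eq_iff]
    · rintro (rfl | rfl | rfl | rfl | rfl) <;> simp [Sym2.eq_iff]
  · rw [Sym2.eq_iff] at h
    rcases h with ⟨h', -⟩ | ⟨h', -⟩
    · exact absurd h'.symm hau
    · exact absurd h'.symm hbu
  · rw [Sym2.eq_iff] at h
    rcases h with ⟨h', -⟩ | ⟨h', -⟩
    · exact absurd h'.symm hbu
    · exact absurd h'.symm hcu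
  · rw [Sym2.eq_iff] at h
    rcases h with ⟨h', -⟩ | ⟨h', -⟩
    · exact absurd h'.symm hcu
    · exact absurd h'.symm hdu
  · rw [Sym2.eq_iff] at h
    have hvd : v = d := by
      rcases h with ⟨h', -⟩ | ⟨-, h⟩
      · exact absurd h'.symm hdu
      · exact h
    subst hvd
    exact ⟨(a, b, c), ⟨h1, h2, h3, h4, had, hcu, hbu, hbd, hac⟩, hsetw⟩

lemma count5 {G : SimpleGraph V} {u v : V} (huv : G.Adj u v) :
    girthCycleCount G 5 s(u, v) = (P5 G u v).ncard := by
  classical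
  have himg : {s : Set (Sym2 V) | IsGirthCycleEdgeSet G 5 s ∧ s(u,v) ∈ s}
      = F5 u v '' P5 G u v := by
    ext s
    constructor
    · rintro ⟨⟨w0, w, hc, hl, rfl⟩, he⟩
      simp only [Set.mem_setOf_eq] at he
      have hu : u ∈ w.support := w.fst_mem_support_of_mem_edges he
      have hc' : (w.rotate u hu).IsCycle := hc.rotate hu
      have hl' : (w.rotate u hu).length = 5 := by rw [length_rotate]; exact hl
      have he' : s(u,v) ∈ (w.rotate u hu).edges := (w.rotate_edges u hu).mem_iff.mpr he
      obtain ⟨t, ht, hset⟩ := key5 huv (w.rotate u hu) hc' hl' he'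
      refine ⟨t, ht, ?_⟩
      rw [← hset]
      ext e
      simp only [Set.mem_setOf_eq]
      exact (w.rotate_edges u hu).mem_iff
    · rintro ⟨⟨p, q, r⟩, ⟨hup, hpq, hqr, hrv, hpv, hru, hqu, hqv, hpr⟩, rfl⟩
      simp only at hup hpq hqr hrv hpv hru hqu hqv hpr
      refine ⟨⟨u, Walk.cons hup (Walk.cons hpq (Walk.cons hqr (Walk.cons hrv
        (Walk.cons huv.symm Walk.nil)))), ?_, by simp, ?_⟩, ?_⟩
      · rw [Walk.isCycle_def]
        refine ⟨⟨?_⟩, by simp, ?_⟩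
        · simp [Sym2.eq_iff, hup.ne, hup.ne', hpq.ne, hpq.ne', hqr.ne, hqr.ne', hrv.ne,
            hrv.ne', huv.ne, huv.ne', hpv, Ne.symm hpv, hru, Ne.symm hru, hqu, Ne.symm hqu,
            hqv, Ne.symm hqv, hpr, Ne.symm hpr]
        · simp [Walk.support_cons, hup.ne', hpq.ne, hpq.ne', hqr.ne, hqr.ne', hrv.ne,
            hrv.ne', huv.ne', hpv, Ne.symm hpv, hru, Ne.symm hru, hqu, Ne.symm hqu,
            hqv, Ne.symm hqv, hpr, Ne.symm hpr]
      · ext e; simp [F5, Walk.edges_cons]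
      · simp only [Set.mem_setOf_eq, F5, Set.mem_insert_iff, Set.mem_singleton_iff]
        simp [Sym2.eq_iff]
  rw [girthCycleCount, himg, Set.ncard_image_of_injOn]
  rintro ⟨p, q, r⟩ ht ⟨p', q', r'⟩ ht' heq
  obtain ⟨hup, hpq, hqr, hrv, hpv, hru, hqu, hqv, hpr⟩ := ht
  obtain ⟨hup', hpq', hqr', hrv', hpv', hru', hqu', hqv', hpr'⟩ := ht'
  simp only at hup hpq hqr hrv hpv hru hqu hqv hpr hup' hpq' hqr' hrv' hpv' hru' hqu' hqv' hpr'
  have hp : p' = p := by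
    have hm : s(u, p') ∈ F5 u v (p, q, r) := by
      rw [heq]; simp [F5]
    simp only [F5, Set.mem_insert_iff, Set.mem_singleton_iff] at hm
    simp [Sym2.eq_iff, hup.ne, Ne.symm hqu, Ne.symm hru, huv.ne, hpv'] at hm
    exact hm
  have hr : r' = r := by
    have hm : s(r', v) ∈ F5 u v (p, q, r) := by
      rw [heq]; simp [F5]
    simp only [F5, Set.mem_insert_iff, Set.mem_singleton_iff] at hm
    simp [Sym2.eq_iff, hru', Ne.symm hpv, Ne.symm hqv, hrv.ne', huv.ne'] at hm
    exact hm
  have hq : q' = q := by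
    have hm : s(p', q') ∈ F5 u v (p, q, r) := by
      rw [heq]; simp [F5]
    rw [hp] at hm
    simp only [F5, Set.mem_insert_iff, Set.mem_singleton_iff] at hm
    simp [Sym2.eq_iff, hup.ne', hqu', hpq.ne, hpr, hpv] at hm
    exact hm
  simp [Prod.ext_iff, hp, hq, hr]

/-- common-neighbour relation -/
def CN (G : SimpleGraph V) (a b : V) : Prop := ∃ q, G.Adj a q ∧ G.Adj q b

lemma count5_pairs {G : SimpleGraph V} {u v : V}
    (hT : ∀ {a b c : V}, G.Adj a b → G.Adj b c → ¬ G.Adj a c)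
    (hQ : ∀ {a b c d : V}, G.Adj a b → G.Adj b c → G.Adj c d → G.Adj d a → a = c ∨ b = d)
    (huv : G.Adj u v) :
    girthCycleCount G 5 s(u, v) =
      {pr : V × V | G.Adj u pr.1 ∧ G.Adj pr.2 v ∧ pr.1 ≠ v ∧ pr.2 ≠ u ∧ CN G pr.1 pr.2}.ncard := by
  rw [count5 huv]
  have himg : {pr : V × V | G.Adj u pr.1 ∧ G.Adj pr.2 v ∧ pr.1 ≠ v ∧ pr.2 ≠ u ∧ CN G pr.1 pr.2}
      = (fun t : V × V × V => (t.1, t.2.2)) '' P5 G u v := by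
    ext ⟨p, r⟩
    simp only [Set.mem_setOf_eq, Set.mem_image]
    constructor
    · rintro ⟨hup, hrv, hpv, hru, q, hpq, hqr⟩
      have hqu : q ≠ u := by
        rintro rfl
        exact hT hqr hrv huv
      have hqv : q ≠ v := by
        rintro rfl
        exact hT hup hpq huv
      have hpr : p ≠ r := by
        rintro rfl
        exact hT hup hrv huv
      exact ⟨(p, q, r), ⟨hup, hpq, hqr, hrv, hpv, hru, hqu, hqv, hpr⟩, rfl⟩
    · rintro ⟨⟨p0, q0, r0⟩, ⟨hup, hpq, hqr, hrv, hpv, hru, hqu, hqv, hpr⟩, heq⟩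
      simp only [Prod.mk.injEq] at heq
      obtain ⟨rfl, rfl⟩ := heq
      exact ⟨hup, hrv, hpv, hru, q0, hpq, hqr⟩
  rw [himg, Set.ncard_image_of_injOn]
  rintro ⟨p, q, r⟩ ht ⟨p', q', r'⟩ ht' heq
  simp only [Prod.mk.injEq] at heq
  obtain ⟨rfl, rfl⟩ := heq
  obtain ⟨hup, hpq, hqr, hrv, hpv, hru, hqu, hqv, hpr⟩ := ht
  obtain ⟨hup', hpq', hqr', hrv', hpv', hru', hqu', hqv', hpr'⟩ := ht'
  simp only at hpq hqr hpr hpq' hqr'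
  have : q' = q := by
    rcases hQ hpq hqr hqr'.symm hpq'.symm with h | h
    · exact absurd h hpr
    · exact h.symm
  simp [this]


/-! ### counting over explicit 2×2 pair sets -/

/-- classical indicator -/
noncomputable def ind (P : Prop) : ℕ := if P then 1 else 0

lemma ind_le_one (P : Prop) : ind P ≤ 1 := by
  rw [ind]; split <;> omega

lemma ind_pos {P : Prop} (h : P) : ind P = 1 := by rw [ind, if_pos h]
lemma ind_neg {P : Prop} (h : ¬ P) : ind P = 0 := by rw [ind, if_neg h]

lemma ncard_pairs {a1 a2 b1 b2 : V} (ha : a1 ≠ a2) (hb : b1 ≠ b2) (P : V → V → Prop) :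
    {pr : V × V | (pr.1 = a1 ∨ pr.1 = a2) ∧ (pr.2 = b1 ∨ pr.2 = b2) ∧ P pr.1 pr.2}.ncard =
      ind (P a1 b1) + ind (P a1 b2) + ind (P a2 b1) + ind (P a2 b2) := by
  classical
  have hset : {pr : V × V | (pr.1 = a1 ∨ pr.1 = a2) ∧ (pr.2 = b1 ∨ pr.2 = b2) ∧ P pr.1 pr.2} =
      ↑((({(a1,b1),(a1,b2),(a2,b1),(a2,b2)} : Finset (V × V))).filter fun pr => P pr.1 pr.2) := by
    ext ⟨x, y⟩
    simp only [Set.mem_setOf_eq, Finset.coe_filter, Finset.mem_insert, Finset.mem_singleton,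
      Prod.mk.injEq]
    constructor
    · rintro ⟨hx | hx, hy | hy, hP⟩ <;> subst hx <;> subst hy <;> simp [hP]
    · rintro ⟨h, hP⟩
      rcases h with ⟨rfl, rfl⟩ | ⟨rfl, rfl⟩ | ⟨rfl, rfl⟩ | ⟨rfl, rfl⟩ <;> simp [hP]
  rw [hset, Set.ncard_coe_finset]
  by_cases h11 : P a1 b1 <;> by_cases h12 : P a1 b2 <;> by_cases h21 : P a2 b1 <;>
      by_cases h22 : P a2 b2 <;>
    simp [ind, Finset.filter_insert, Finset.filter_singleton, h11, h12, h21, h22,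
      Finset.card_insert_of_notMem, Finset.mem_insert, Finset.mem_singleton,
      Prod.mk.injEq, ha, hb, Ne.symm ha, Ne.symm hb]

/-! ### girth facts -/

lemma egirth_le_of_cycle {G : SimpleGraph V} {a : V} {w : G.Walk a a} (hc : w.IsCycle) :
    G.egirth ≤ w.length :=
  le_egirth.mp (le_refl G.egirth) a w hc

lemma triangle_free {G : SimpleGraph V} (hg : (3 : ℕ∞) < G.egirth) :
    ∀ {a b c : V}, G.Adj a b → G.Adj b c → ¬ G.Adj a c := by
  intro a b c hab hbc hac
  have hcyc : (Walk.cons hab (Walk.cons hbc (Walk.cons hac.symm Walk.nil))).IsCycle := by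
    rw [Walk.isCycle_def]
    refine ⟨⟨?_⟩, by simp, ?_⟩
    · simp [Sym2.eq_iff, hab.ne, hab.ne', hbc.ne, hbc.ne', hac.ne, hac.ne']
    · simp [Walk.support_cons, hab.ne', hbc.ne, hbc.ne', hac.ne']
  have := egirth_le_of_cycle hcyc
  simp only [Walk.length_cons, Walk.length_nil] at this
  rw [show ((0:ℕ)+1+1+1 : ℕ) = 3 by norm_num] at this
  exact absurd (lt_of_lt_of_le hg this) (by norm_num)

lemma quad_free {G : SimpleGraph V} (hg : (4 : ℕ∞) < G.egirth) :
    ∀ {a b c d : V}, G.Adj a b → G.Adj b c → G.Adj c d → G.Adj d a → a = c ∨ b = d := by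
  intro a b c d hab hbc hcd hda
  by_contra h
  push_neg at h
  obtain ⟨hac, hbd⟩ := h
  have hcyc : (Walk.cons hab (Walk.cons hbc (Walk.cons hcd (Walk.cons hda Walk.nil)))).IsCycle := by
    rw [Walk.isCycle_def]
    refine ⟨⟨?_⟩, by simp, ?_⟩
    · simp [Sym2.eq_iff, hab.ne, hab.ne', hbc.ne, hbc.ne', hcd.ne, hcd.ne', hda.ne, hda.ne',
        hac, hbd, Ne.symm hac, Ne.symm hbd]
    · simp [Walk.support_cons, hab.ne', hbc.ne, hbc.ne', hcd.ne, hcd.ne', hda.ne, hac, hbd,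
        Ne.symm hac, Ne.symm hbd]
  have := egirth_le_of_cycle hcyc
  simp only [Walk.length_cons, Walk.length_nil] at this
  rw [show ((0:ℕ)+1+1+1+1 : ℕ) = 4 by norm_num] at this
  exact absurd (lt_of_lt_of_le hg this) (by norm_num)

lemma exists_vertex {G : SimpleGraph V} {n : ℕ} (hn : 0 < n) (hg : G.egirth = (n : ℕ∞)) :
    Nonempty V := by
  have : ¬ G.IsAcyclic := by
    rw [← egirth_eq_top, hg]
    intro h
    exact absurd h (by
      intro hh
      have : ((n:ℕ∞)) = ⊤ := hh
      simp at this)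
  obtain ⟨a, -, -⟩ := (SimpleGraph.exists_egirth_eq_length (G := G)).mpr this
  exact ⟨a⟩

/-! ### cubic neighborhoods -/

lemma cubic_nbrs {G : SimpleGraph V} {v u : V} (h3 : (G.neighborSet v).ncard = 3)
    (huv : G.Adj v u) : ∃ a b, u ≠ a ∧ u ≠ b ∧ a ≠ b ∧ G.neighborSet v = {u, a, b} := by
  obtain ⟨x, y, z, hxy, hxz, hyz, hset⟩ := Set.ncard_eq_three.mp h3
  have hu : u ∈ G.neighborSet v := huv
  rw [hset] at hu
  have e1 : ({x, y, z} : Set V) = {y, x, z} := by ext w; simp; tauto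
  have e2 : ({x, y, z} : Set V) = {z, x, y} := by ext w; simp; tauto
  rcases hu with rfl | rfl | rfl
  · exact ⟨y, z, hxy, hxz, hyz, hset⟩
  · exact ⟨x, z, Ne.symm hxy, hyz, hxz, by rw [hset, e1]⟩
  · exact ⟨x, y, Ne.symm hxz, Ne.symm hyz, hxy, by rw [hset, e2]⟩

lemma adj_iff_of_nbhd {G : SimpleGraph V} {v u a b : V} (hN : G.neighborSet v = {u, a, b}) :
    ∀ {w : V}, G.Adj v w ↔ (w = u ∨ w = a ∨ w = b) := by
  intro w
  rw [← SimpleGraph.mem_neighborSet, hN]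
  simp

lemma nbhd_eq_of_adj [Finite V] {G : SimpleGraph V} {v a b c : V}
    (h3 : (G.neighborSet v).ncard = 3) (hab : a ≠ b) (hac : a ≠ c) (hbc : b ≠ c)
    (h1 : G.Adj v a) (h2 : G.Adj v b) (h3' : G.Adj v c) : G.neighborSet v = {a, b, c} := by
  have hsub : ({a, b, c} : Set V) ⊆ G.neighborSet v := by
    intro w hw
    rcases hw with rfl | rfl | rfl
    · exact h1
    · exact h2
    · exact h3'
  have hcard : ({a, b, c} : Set V).ncard = 3 := Set.ncard_eq_three.mpr ⟨a, b, c, hab, hac, hbc, rfl⟩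
  exact (Set.eq_of_subset_of_ncard_le hsub (by rw [h3, hcard]) (Set.toFinite _)).symm

/-! ### signature -/

lemma sig_eq [Fintype V] {G : SimpleGraph V} {v u a b : V} (hN : G.neighborSet v = {u, a, b})
    (hua : u ≠ a) (hub : u ≠ b) (hab : a ≠ b) (g : ℕ) :
    vertexSignature G g v = {girthCycleCount G g s(v, u), girthCycleCount G g s(v, a),
      girthCycleCount G g s(v, b)} := by
  classical
  rw [vertexSignature]
  have hfin : (G.neighborSet v).toFinite.toFinset = ({u, a, b} : Finset V) := by
    ext x
    rw [Set.Finite.mem_toFinset, hN]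
    simp
  rw [hfin]
  have hval : ({u, a, b} : Finset V).val = u ::ₘ a ::ₘ {b} := by
    rw [Finset.insert_val_of_notMem (by simp [hua, hub]),
      Finset.insert_val_of_notMem (by simp [hab])]
    rfl
  rw [hval]
  simp

/-! ### multiset facts -/

lemma m23 {x y : ℕ} (h : ({x, y} : Multiset ℕ) = {2, 3}) : (x = 2 ∧ y = 3) ∨ (x = 3 ∧ y = 2) := by
  have hx : x ∈ ({2, 3} : Multiset ℕ) := by rw [← h]; simp
  simp only [Multiset.insert_eq_cons, Multiset.mem_cons, Multiset.mem_singleton] at hx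
  rcases hx with rfl | rfl
  · left
    refine ⟨rfl, ?_⟩
    have := (Multiset.cons_inj_right (2:ℕ)).mp h
    simpa using this
  · right
    refine ⟨rfl, ?_⟩
    have h' : (3 ::ₘ {y} : Multiset ℕ) = 3 ::ₘ {2} := by
      rw [show ({2,3} : Multiset ℕ) = 3 ::ₘ {2} from by decide] at h
      exact h
    have := (Multiset.cons_inj_right (3:ℕ)).mp h'
    simpa using this

lemma m33 {x y : ℕ} (h : ({x, y} : Multiset ℕ) = {3, 3}) : x = 3 ∧ y = 3 := by
  have hx : x ∈ ({3, 3} : Multiset ℕ) := by rw [← h]; simp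
  simp only [Multiset.insert_eq_cons, Multiset.mem_cons, Multiset.mem_singleton] at hx
  have hx3 : x = 3 := by tauto
  subst hx3
  have := (Multiset.cons_inj_right (3:ℕ)).mp h
  simp only [Multiset.singleton_inj] at this  -- {y} = {3}
  exact ⟨rfl, this⟩

lemma mem233 {x y z : ℕ} (h : ({x, y, z} : Multiset ℕ) = {2, 3, 3}) :
    (x = 2 ∨ x = 3) ∧ (y = 2 ∨ y = 3) ∧ (z = 2 ∨ z = 3) := by
  refine ⟨?_, ?_, ?_⟩
  · have hm : x ∈ ({x, y, z} : Multiset ℕ) := by simp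
    rw [h] at hm
    simp only [Multiset.insert_eq_cons, Multiset.mem_cons, Multiset.mem_singleton] at hm
    tauto
  · have hm : y ∈ ({x, y, z} : Multiset ℕ) := by simp
    rw [h] at hm
    simp only [Multiset.insert_eq_cons, Multiset.mem_cons, Multiset.mem_singleton] at hm
    tauto
  · have hm : z ∈ ({x, y, z} : Multiset ℕ) := by simp
    rw [h] at hm
    simp only [Multiset.insert_eq_cons, Multiset.mem_cons, Multiset.mem_singleton] at hm
    tauto


lemma cn_unfold {G : SimpleGraph V} {a b x c1 c2 : V}
    (hNa : G.neighborSet a = {x, c1, c2}) (hxb : ¬ G.Adj x b) :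
    CN G a b ↔ (G.Adj c1 b ∨ G.Adj c2 b) := by
  constructor
  · rintro ⟨q, haq, hqb⟩
    have hq : q ∈ G.neighborSet a := haq
    rw [hNa] at hq
    rcases hq with rfl | rfl | rfl
    · exact absurd hqb hxb
    · exact Or.inl hqb
    · exact Or.inr hqb
  · have hc1 : G.Adj a c1 := by rw [← SimpleGraph.mem_neighborSet, hNa]; simp
    have hc2 : G.Adj a c2 := by rw [← SimpleGraph.mem_neighborSet, hNa]; simp
    rintro (h | h)
    · exact ⟨c1, hc1, h⟩
    · exact ⟨c2, hc2, h⟩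

lemma cover_eq {A B C D : Prop} (hAB : ¬(A ∧ B)) (hCD : ¬(C ∧ D)) (hAC : ¬(A ∧ C))
    (hBD : ¬(B ∧ D)) :
    ind (A ∨ C) + ind (B ∨ D) = ind (A ∨ B) + ind (C ∨ D) := by
  by_cases hA : A <;> by_cases hB : B <;> by_cases hC : C <;> by_cases hD : D <;> simp_all [ind]

lemma extract_one {A B C D : Prop} (hAB : ¬(A ∧ B)) (hCD : ¬(C ∧ D))
    (h : ind (A ∨ B) + ind (C ∨ D) = 1) :
    (A ∧ ¬B ∧ ¬C ∧ ¬D) ∨ (B ∧ ¬A ∧ ¬C ∧ ¬D) ∨ (C ∧ ¬A ∧ ¬B ∧ ¬D) ∨ (D ∧ ¬A ∧ ¬B ∧ ¬C) := by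
  by_cases hA : A <;> by_cases hB : B <;> by_cases hC : C <;> by_cases hD : D <;> simp_all [ind]

lemma extract_match {A B C D : Prop} (hAB : ¬(A ∧ B)) (hCD : ¬(C ∧ D)) (hAC : ¬(A ∧ C))
    (hBD : ¬(B ∧ D))
    (h : ind (A ∨ B) + ind (C ∨ D) = 2) :
    (A ∧ D ∧ ¬B ∧ ¬C) ∨ (B ∧ C ∧ ¬A ∧ ¬D) := by
  by_cases hA : A <;> by_cases hB : B <;> by_cases hC : C <;> by_cases hD : D <;> simp_all [ind]

lemma eps4 {G : SimpleGraph V} {u v a1 a2 b1 b2 : V} (huv : G.Adj u v)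
    (hNu : G.neighborSet u = {v, a1, a2}) (hNv : G.neighborSet v = {u, b1, b2})
    (hva1 : v ≠ a1) (hva2 : v ≠ a2) (ha : a1 ≠ a2)
    (hub1 : u ≠ b1) (hub2 : u ≠ b2) (hb : b1 ≠ b2) :
    girthCycleCount G 4 s(u, v) =
      ind (G.Adj a1 b1) + ind (G.Adj a1 b2) + ind (G.Adj a2 b1) + ind (G.Adj a2 b2) := by
  rw [count4 huv]
  have hP : P4 G u v = {pr : V × V |
      (pr.1 = a1 ∨ pr.1 = a2) ∧ (pr.2 = b1 ∨ pr.2 = b2) ∧ G.Adj pr.1 pr.2} := by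
    ext ⟨p, r⟩
    simp only [P4, Set.mem_setOf_eq]
    constructor
    · rintro ⟨hup, hpr, hrv, hpv, hru⟩
      have hp := (adj_iff_of_nbhd hNu).mp hup
      have hr := (adj_iff_of_nbhd hNv).mp hrv.symm
      rcases hp with rfl | hp
      · exact absurd rfl hpv
      rcases hr with rfl | hr
      · exact absurd rfl hru
      exact ⟨hp, hr, hpr⟩
    · rintro ⟨hp, hr, hadj⟩
      have hup : G.Adj u p := (adj_iff_of_nbhd hNu).mpr (Or.inr hp)
      have hrv : G.Adj r v := ((adj_iff_of_nbhd hNv).mpr (Or.inr hr)).symm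
      refine ⟨hup, hadj, hrv, ?_, ?_⟩
      · rcases hp with rfl | rfl
        · exact Ne.symm hva1
        · exact Ne.symm hva2
      · rcases hr with rfl | rfl
        · exact Ne.symm hub1
        · exact Ne.symm hub2
  rw [hP, ncard_pairs ha hb]

lemma eps5 {G : SimpleGraph V} {u v a1 a2 b1 b2 : V}
    (hT : ∀ {a b c : V}, G.Adj a b → G.Adj b c → ¬ G.Adj a c)
    (hQ : ∀ {a b c d : V}, G.Adj a b → G.Adj b c → G.Adj c d → G.Adj d a → a = c ∨ b = d)
    (huv : G.Adj u v)
    (hNu : G.neighborSet u = {v, a1, a2}) (hNv : G.neighborSet v = {u, b1, b2})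
    (hva1 : v ≠ a1) (hva2 : v ≠ a2) (ha : a1 ≠ a2)
    (hub1 : u ≠ b1) (hub2 : u ≠ b2) (hb : b1 ≠ b2) :
    girthCycleCount G 5 s(u, v) =
      ind (CN G a1 b1) + ind (CN G a1 b2) + ind (CN G a2 b1) + ind (CN G a2 b2) := by
  rw [count5_pairs @hT @hQ huv]
  have hP : {pr : V × V | G.Adj u pr.1 ∧ G.Adj pr.2 v ∧ pr.1 ≠ v ∧ pr.2 ≠ u ∧ CN G pr.1 pr.2}
      = {pr : V × V | (pr.1 = a1 ∨ pr.1 = a2) ∧ (pr.2 = b1 ∨ pr.2 = b2) ∧ CN G pr.1 pr.2} := by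
    ext ⟨p, r⟩
    simp only [Set.mem_setOf_eq]
    constructor
    · rintro ⟨hup, hrv, hpv, hru, hcn⟩
      have hp := (adj_iff_of_nbhd hNu).mp hup
      have hr := (adj_iff_of_nbhd hNv).mp hrv.symm
      rcases hp with rfl | hp
      · exact absurd rfl hpv
      rcases hr with rfl | hr
      · exact absurd rfl hru
      exact ⟨hp, hr, hcn⟩
    · rintro ⟨hp, hr, hcn⟩
      have hup : G.Adj u p := (adj_iff_of_nbhd hNu).mpr (Or.inr hp)
      have hrv : G.Adj r v := ((adj_iff_of_nbhd hNv).mpr (Or.inr hr)).symm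
      refine ⟨hup, hrv, ?_, ?_, hcn⟩
      · rcases hp with rfl | rfl
        · exact Ne.symm hva1
        · exact Ne.symm hva2
      · rcases hr with rfl | rfl
        · exact Ne.symm hub1
        · exact Ne.symm hub2
  rw [hP, ncard_pairs ha hb]

lemma set_swap12 {x y z : V} : ({x, y, z} : Set V) = {y, x, z} := by
  ext w; simp; tauto

lemma set_rot {x y z : V} : ({x, y, z} : Set V) = {z, x, y} := by
  ext w; simp; tauto

lemma set_swap23 {x y z : V} : ({x, y, z} : Set V) = {x, z, y} := by
  ext w; simp; tauto

lemma sys_arith {p1 p2 p3 p4 q1 q2 q3 q4 r1 r2 r3 r4 : ℕ}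
    (hr1 : r1 ≤ 1) (hr2 : r2 ≤ 1)
    (e1 : p3 + p4 + r1 + r2 = 3) (e2 : q3 + q4 + r3 + r4 = 3)
    (e0 : p1 + p2 + q1 + q2 = 2)
    (cE : p3 + p4 = p1 + p2) (cF : q3 + q4 = q1 + q2) (cG : r3 + r4 = r1 + r2) :
    p1 + p2 = 1 ∧ q1 + q2 = 1 ∧ r1 + r2 = 2 := by omega

/-- Structure around an edge `uv` with `ε = 2` in a cubic girth-5 graph where the other
two edges at `u` have `ε = 3`. -/
lemma SYS {G : SimpleGraph V} {u v a1 a2 b1 b2 c1 c2 d1 d2 : V}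
    (hT : ∀ {a b c : V}, G.Adj a b → G.Adj b c → ¬ G.Adj a c)
    (hQ : ∀ {a b c d : V}, G.Adj a b → G.Adj b c → G.Adj c d → G.Adj d a → a = c ∨ b = d)
    (huv : G.Adj u v)
    (hNu : G.neighborSet u = {v, a1, a2}) (hNv : G.neighborSet v = {u, b1, b2})
    (hNa1 : G.neighborSet a1 = {u, c1, c2}) (hNa2 : G.neighborSet a2 = {u, d1, d2})
    (hva1 : v ≠ a1) (hva2 : v ≠ a2) (ha : a1 ≠ a2)
    (hub1 : u ≠ b1) (hub2 : u ≠ b2) (hb : b1 ≠ b2)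
    (huc1 : u ≠ c1) (huc2 : u ≠ c2) (hc : c1 ≠ c2)
    (hud1 : u ≠ d1) (hud2 : u ≠ d2) (hd : d1 ≠ d2)
    (hE0 : girthCycleCount G 5 s(u, v) = 2)
    (hE1 : girthCycleCount G 5 s(u, a1) = 3)
    (hE2 : girthCycleCount G 5 s(u, a2) = 3) :
    ((G.Adj b1 c1 ∧ ¬G.Adj b1 c2 ∧ ¬G.Adj b2 c1 ∧ ¬G.Adj b2 c2) ∨
     (G.Adj b1 c2 ∧ ¬G.Adj b1 c1 ∧ ¬G.Adj b2 c1 ∧ ¬G.Adj b2 c2) ∨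
     (G.Adj b2 c1 ∧ ¬G.Adj b1 c1 ∧ ¬G.Adj b1 c2 ∧ ¬G.Adj b2 c2) ∨
     (G.Adj b2 c2 ∧ ¬G.Adj b1 c1 ∧ ¬G.Adj b1 c2 ∧ ¬G.Adj b2 c1)) ∧
    ((G.Adj b1 d1 ∧ ¬G.Adj b1 d2 ∧ ¬G.Adj b2 d1 ∧ ¬G.Adj b2 d2) ∨
     (G.Adj b1 d2 ∧ ¬G.Adj b1 d1 ∧ ¬G.Adj b2 d1 ∧ ¬G.Adj b2 d2) ∨
     (G.Adj b2 d1 ∧ ¬G.Adj b1 d1 ∧ ¬G.Adj b1 d2 ∧ ¬G.Adj b2 d2) ∨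
     (G.Adj b2 d2 ∧ ¬G.Adj b1 d1 ∧ ¬G.Adj b1 d2 ∧ ¬G.Adj b2 d1)) ∧
    ((G.Adj c1 d1 ∧ G.Adj c2 d2 ∧ ¬G.Adj c1 d2 ∧ ¬G.Adj c2 d1) ∨
     (G.Adj c1 d2 ∧ G.Adj c2 d1 ∧ ¬G.Adj c1 d1 ∧ ¬G.Adj c2 d2)) := by
  have hAua1 : G.Adj u a1 := (adj_iff_of_nbhd hNu).mpr (Or.inr (Or.inl rfl))
  have hAua2 : G.Adj u a2 := (adj_iff_of_nbhd hNu).mpr (Or.inr (Or.inr rfl))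
  have hAvb1 : G.Adj v b1 := (adj_iff_of_nbhd hNv).mpr (Or.inr (Or.inl rfl))
  have hAvb2 : G.Adj v b2 := (adj_iff_of_nbhd hNv).mpr (Or.inr (Or.inr rfl))
  have hAa1c1 : G.Adj a1 c1 := (adj_iff_of_nbhd hNa1).mpr (Or.inr (Or.inl rfl))
  have hAa1c2 : G.Adj a1 c2 := (adj_iff_of_nbhd hNa1).mpr (Or.inr (Or.inr rfl))
  have hAa2d1 : G.Adj a2 d1 := (adj_iff_of_nbhd hNa2).mpr (Or.inr (Or.inl rfl))
  have hAa2d2 : G.Adj a2 d2 := (adj_iff_of_nbhd hNa2).mpr (Or.inr (Or.inr rfl))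
  have hnva1 : ¬ G.Adj v a1 := hT huv.symm hAua1
  have hnva2 : ¬ G.Adj v a2 := hT huv.symm hAua2
  have hnub1 : ¬ G.Adj u b1 := hT huv hAvb1
  have hnub2 : ¬ G.Adj u b2 := hT huv hAvb2
  have hna12 : ¬ G.Adj a1 a2 := hT hAua1.symm hAua2
  have hvc1 : v ≠ c1 := by rintro rfl; exact hnva1 hAa1c1.symm
  have hvc2 : v ≠ c2 := by rintro rfl; exact hnva1 hAa1c2.symm
  have hvd1 : v ≠ d1 := by rintro rfl; exact hnva2 hAa2d1.symm
  have hvd2 : v ≠ d2 := by rintro rfl; exact hnva2 hAa2d2.symm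
  have ha1c1 : a1 ≠ c1 := hAa1c1.ne
  have ha1c2 : a1 ≠ c2 := hAa1c2.ne
  have ha2d1 : a2 ≠ d1 := hAa2d1.ne
  have ha2d2 : a2 ≠ d2 := hAa2d2.ne
  have ha2c1 : a2 ≠ c1 := by rintro rfl; exact hna12 hAa1c1
  have ha2c2 : a2 ≠ c2 := by rintro rfl; exact hna12 hAa1c2
  have ha1d1 : a1 ≠ d1 := by rintro rfl; exact hna12 hAa2d1.symm
  have ha1d2 : a1 ≠ d2 := by rintro rfl; exact hna12 hAa2d2.symm
  have ha1b1 : a1 ≠ b1 := by rintro rfl; exact hnva1 hAvb1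
  have ha1b2 : a1 ≠ b2 := by rintro rfl; exact hnva1 hAvb2
  have ha2b1 : a2 ≠ b1 := by rintro rfl; exact hnva2 hAvb1
  have ha2b2 : a2 ≠ b2 := by rintro rfl; exact hnva2 hAvb2
  have hnuc1 : ¬ G.Adj u c1 := by
    intro h
    rcases (adj_iff_of_nbhd hNu).mp h with h' | h' | h'
    · exact hvc1 h'.symm
    · exact ha1c1 h'.symm
    · exact ha2c1 h'.symm
  have hnuc2 : ¬ G.Adj u c2 := by
    intro h
    rcases (adj_iff_of_nbhd hNu).mp h with h' | h' | h'
    · exact hvc2 h'.symm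
    · exact ha1c2 h'.symm
    · exact ha2c2 h'.symm
  have hnud1 : ¬ G.Adj u d1 := by
    intro h
    rcases (adj_iff_of_nbhd hNu).mp h with h' | h' | h'
    · exact hvd1 h'.symm
    · exact ha1d1 h'.symm
    · exact ha2d1 h'.symm
  have hnud2 : ¬ G.Adj u d2 := by
    intro h
    rcases (adj_iff_of_nbhd hNu).mp h with h' | h' | h'
    · exact hvd2 h'.symm
    · exact ha1d2 h'.symm
    · exact ha2d2 h'.symm
  -- matching constraints
  have hEr1 : ¬(G.Adj b1 c1 ∧ G.Adj b1 c2) := by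
    rintro ⟨h1, h2⟩
    rcases hQ hAa1c1 h1.symm h2 hAa1c2.symm with h | h
    · exact ha1b1 h
    · exact hc h
  have hEr2 : ¬(G.Adj b2 c1 ∧ G.Adj b2 c2) := by
    rintro ⟨h1, h2⟩
    rcases hQ hAa1c1 h1.symm h2 hAa1c2.symm with h | h
    · exact ha1b2 h
    · exact hc h
  have hEc1 : ¬(G.Adj b1 c1 ∧ G.Adj b2 c1) := by
    rintro ⟨h1, h2⟩
    rcases hQ hAvb1 h1 h2.symm hAvb2.symm with h | h
    · exact hvc1 h
    · exact hb h
  have hEc2 : ¬(G.Adj b1 c2 ∧ G.Adj b2 c2) := by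
    rintro ⟨h1, h2⟩
    rcases hQ hAvb1 h1 h2.symm hAvb2.symm with h | h
    · exact hvc2 h
    · exact hb h
  have hFr1 : ¬(G.Adj b1 d1 ∧ G.Adj b1 d2) := by
    rintro ⟨h1, h2⟩
    rcases hQ hAa2d1 h1.symm h2 hAa2d2.symm with h | h
    · exact ha2b1 h
    · exact hd h
  have hFr2 : ¬(G.Adj b2 d1 ∧ G.Adj b2 d2) := by
    rintro ⟨h1, h2⟩
    rcases hQ hAa2d1 h1.symm h2 hAa2d2.symm with h | h
    · exact ha2b2 h
    · exact hd h
  have hFc1 : ¬(G.Adj b1 d1 ∧ G.Adj b2 d1) := by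
    rintro ⟨h1, h2⟩
    rcases hQ hAvb1 h1 h2.symm hAvb2.symm with h | h
    · exact hvd1 h
    · exact hb h
  have hFc2 : ¬(G.Adj b1 d2 ∧ G.Adj b2 d2) := by
    rintro ⟨h1, h2⟩
    rcases hQ hAvb1 h1 h2.symm hAvb2.symm with h | h
    · exact hvd2 h
    · exact hb h
  have hGr1 : ¬(G.Adj c1 d1 ∧ G.Adj c1 d2) := by
    rintro ⟨h1, h2⟩
    rcases hQ hAa2d1 h1.symm h2 hAa2d2.symm with h | h
    · exact ha2c1 h
    · exact hd h
  have hGr2 : ¬(G.Adj c2 d1 ∧ G.Adj c2 d2) := by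
    rintro ⟨h1, h2⟩
    rcases hQ hAa2d1 h1.symm h2 hAa2d2.symm with h | h
    · exact ha2c2 h
    · exact hd h
  have hGc1 : ¬(G.Adj c1 d1 ∧ G.Adj c2 d1) := by
    rintro ⟨h1, h2⟩
    rcases hQ hAa1c1 h1 h2.symm hAa1c2.symm with h | h
    · exact ha1d1 h
    · exact hc h
  have hGc2 : ¬(G.Adj c1 d2 ∧ G.Adj c2 d2) := by
    rintro ⟨h1, h2⟩
    rcases hQ hAa1c1 h1 h2.symm hAa1c2.symm with h | h
    · exact ha1d2 h
    · exact hc h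
  -- the three counting equations
  have hNu1 : G.neighborSet u = {a1, v, a2} := by rw [hNu]; exact set_swap12
  have hNu2 : G.neighborSet u = {a2, v, a1} := by rw [hNu]; exact set_rot
  have e0 : ind (CN G a1 b1) + ind (CN G a1 b2) + ind (CN G a2 b1) + ind (CN G a2 b2) = 2 :=
    (eps5 @hT @hQ huv hNu hNv hva1 hva2 ha hub1 hub2 hb).symm.trans hE0
  have e1 : ind (CN G v c1) + ind (CN G v c2) + ind (CN G a2 c1) + ind (CN G a2 c2) = 3 :=
    (eps5 @hT @hQ hAua1 hNu1 hNa1 (Ne.symm hva1) ha hva2 huc1 huc2 hc).symm.trans hE1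
  have e2 : ind (CN G v d1) + ind (CN G v d2) + ind (CN G a1 d1) + ind (CN G a1 d2) = 3 :=
    (eps5 @hT @hQ hAua2 hNu2 hNa2 (Ne.symm hva2) (Ne.symm ha) hva1 hud1 hud2 hd).symm.trans hE2
  -- unfold CN
  have uvc1 : CN G v c1 ↔ (G.Adj b1 c1 ∨ G.Adj b2 c1) := cn_unfold hNv hnuc1
  have uvc2 : CN G v c2 ↔ (G.Adj b1 c2 ∨ G.Adj b2 c2) := cn_unfold hNv hnuc2
  have uvd1 : CN G v d1 ↔ (G.Adj b1 d1 ∨ G.Adj b2 d1) := cn_unfold hNv hnud1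
  have uvd2 : CN G v d2 ↔ (G.Adj b1 d2 ∨ G.Adj b2 d2) := cn_unfold hNv hnud2
  have ua2c1 : CN G a2 c1 ↔ (G.Adj c1 d1 ∨ G.Adj c1 d2) :=
    (cn_unfold hNa2 hnuc1).trans (or_congr (adj_comm G d1 c1) (adj_comm G d2 c1))
  have ua2c2 : CN G a2 c2 ↔ (G.Adj c2 d1 ∨ G.Adj c2 d2) :=
    (cn_unfold hNa2 hnuc2).trans (or_congr (adj_comm G d1 c2) (adj_comm G d2 c2))
  have ua1d1 : CN G a1 d1 ↔ (G.Adj c1 d1 ∨ G.Adj c2 d1) := cn_unfold hNa1 hnud1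
  have ua1d2 : CN G a1 d2 ↔ (G.Adj c1 d2 ∨ G.Adj c2 d2) := cn_unfold hNa1 hnud2
  have ua1b1 : CN G a1 b1 ↔ (G.Adj b1 c1 ∨ G.Adj b1 c2) :=
    (cn_unfold hNa1 hnub1).trans (or_congr (adj_comm G c1 b1) (adj_comm G c2 b1))
  have ua1b2 : CN G a1 b2 ↔ (G.Adj b2 c1 ∨ G.Adj b2 c2) :=
    (cn_unfold hNa1 hnub2).trans (or_congr (adj_comm G c1 b2) (adj_comm G c2 b2))
  have ua2b1 : CN G a2 b1 ↔ (G.Adj b1 d1 ∨ G.Adj b1 d2) :=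
    (cn_unfold hNa2 hnub1).trans (or_congr (adj_comm G d1 b1) (adj_comm G d2 b1))
  have ua2b2 : CN G a2 b2 ↔ (G.Adj b2 d1 ∨ G.Adj b2 d2) :=
    (cn_unfold hNa2 hnub2).trans (or_congr (adj_comm G d1 b2) (adj_comm G d2 b2))
  rw [ua1b1, ua1b2, ua2b1, ua2b2] at e0
  rw [uvc1, uvc2, ua2c1, ua2c2] at e1
  rw [uvd1, uvd2, ua1d1, ua1d2] at e2
  have cE := cover_eq hEr1 hEr2 hEc1 hEc2
  have cF := cover_eq hFr1 hFr2 hFc1 hFc2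
  have cG := cover_eq hGr1 hGr2 hGc1 hGc2
  have hr1 : ind (G.Adj c1 d1 ∨ G.Adj c1 d2) ≤ 1 := ind_le_one _
  have hr2 : ind (G.Adj c2 d1 ∨ G.Adj c2 d2) ≤ 1 := ind_le_one _
  obtain ⟨sE, sF, sG⟩ := sys_arith hr1 hr2 e1 e2 e0 cE cF cG
  exact ⟨extract_one hEr1 hEr2 sE, extract_one hFr1 hFr2 sF,
    extract_match hGr1 hGr2 hGc1 hGc2 sG⟩

lemma extract_three {A B C D : Prop} (h : ind A + ind B + ind C + ind D = 3) :
    (¬A ∧ B ∧ C ∧ D) ∨ (¬B ∧ A ∧ C ∧ D) ∨ (¬C ∧ A ∧ B ∧ D) ∨ (¬D ∧ A ∧ B ∧ C) := by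
  by_cases hA : A <;> by_cases hB : B <;> by_cases hC : C <;> by_cases hD : D <;>
    simp_all [ind]

lemma sig_contra {a b t : ℕ} (h1 : ({a, b, 3} : Multiset ℕ) = {3, 3, 2})
    (h2 : ({a, b, 3} : Multiset ℕ) = {2, 2, t}) : False := by
  have hc := congrArg (Multiset.count 2) (h1.symm.trans h2)
  simp only [Multiset.insert_eq_cons, Multiset.count_cons, Multiset.count_singleton] at hc
  norm_num at hc

lemma conf4 [Fintype V] {G : SimpleGraph V} {a b : ℕ} {u v x1 x2 y1 y2 : V}
    (hcub : ∀ w : V, (G.neighborSet w).ncard = 3)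
    (hT : ∀ {p q r : V}, G.Adj p q → G.Adj q r → ¬ G.Adj p r)
    (hsig : ∀ w : V, vertexSignature G 4 w = {a, b, 3})
    (huv : G.Adj u v)
    (hNu : G.neighborSet u = {v, x1, x2}) (hNv : G.neighborSet v = {u, y1, y2})
    (hvx1 : v ≠ x1) (hvx2 : v ≠ x2) (hx : x1 ≠ x2)
    (huy1 : u ≠ y1) (huy2 : u ≠ y2) (hy : y1 ≠ y2)
    (hc3 : girthCycleCount G 4 s(u, v) = 3)
    (h11 : G.Adj x1 y1) (h12 : G.Adj x1 y2) (h21 : G.Adj x2 y1) (h22 : ¬ G.Adj x2 y2) :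
    False := by
  have hAux1 : G.Adj u x1 := (adj_iff_of_nbhd hNu).mpr (Or.inr (Or.inl rfl))
  have hAux2 : G.Adj u x2 := (adj_iff_of_nbhd hNu).mpr (Or.inr (Or.inr rfl))
  have hAvy1 : G.Adj v y1 := (adj_iff_of_nbhd hNv).mpr (Or.inr (Or.inl rfl))
  have hAvy2 : G.Adj v y2 := (adj_iff_of_nbhd hNv).mpr (Or.inr (Or.inr rfl))
  have hx1y1 : x1 ≠ y1 := by rintro rfl; exact hT huv hAvy1 hAux1
  have hx1y2 : x1 ≠ y2 := by rintro rfl; exact hT huv hAvy2 hAux1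
  have hx2y1 : x2 ≠ y1 := by rintro rfl; exact hT huv hAvy1 hAux2
  have hx2y2 : x2 ≠ y2 := by rintro rfl; exact hT huv hAvy2 hAux2
  have hNx1 : G.neighborSet x1 = {u, y1, y2} :=
    nbhd_eq_of_adj (hcub x1) huy1 huy2 hy hAux1.symm h11 h12
  have hNy1 : G.neighborSet y1 = {v, x1, x2} :=
    nbhd_eq_of_adj (hcub y1) hvx1 hvx2 hx hAvy1.symm h11.symm h21.symm
  -- third neighbour of x2
  obtain ⟨m, hum, hy1m, hNx2⟩ :
      ∃ m, u ≠ m ∧ y1 ≠ m ∧ G.neighborSet x2 = {u, y1, m} := by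
    obtain ⟨m1, m2, hum1, hum2, hm12, hN2⟩ := cubic_nbrs (hcub x2) hAux2.symm
    have hy1mem : y1 ∈ G.neighborSet x2 := h21
    rw [hN2] at hy1mem
    rcases hy1mem with h' | h' | h'
    · exact absurd h' (Ne.symm huy1)  -- y1 = u impossible
    · exact ⟨m2, hum2, by rw [h']; exact hm12, by rw [hN2, ← h']⟩
    · exact ⟨m1, hum1, by rw [h']; exact hm12.symm, by rw [hN2, ← h', set_swap23]⟩
  have hAx2m : G.Adj x2 m := (adj_iff_of_nbhd hNx2).mpr (Or.inr (Or.inr rfl))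
  have hmy2 : m ≠ y2 := by rintro rfl; exact h22 hAx2m
  have hnvm : ¬ G.Adj v m := by
    intro h
    rcases (adj_iff_of_nbhd hNv).mp h with h' | h' | h'
    · exact hum h'.symm
    · exact hy1m h'.symm
    · exact hmy2 h'
  have hnx1m : ¬ G.Adj x1 m := by
    intro h
    rcases (adj_iff_of_nbhd hNx1).mp h with h' | h' | h'
    · exact hum h'.symm
    · exact hy1m h'.symm
    · exact hmy2 h'
  -- ε(u, x1) = 3
  have hNu1 : G.neighborSet u = {x1, v, x2} := by rw [hNu]; exact set_swap12
  have hNu2 : G.neighborSet u = {x2, v, x1} := by rw [hNu]; exact set_rot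
  have e1 : girthCycleCount G 4 s(u, x1) = 3 := by
    rw [eps4 hAux1 hNu1 hNx1 (Ne.symm hvx1) hx hvx2 huy1 huy2 hy,
      ind_pos hAvy1, ind_pos hAvy2, ind_pos h21, ind_neg h22]
  -- ε(u, x2) = 2
  have e2 : girthCycleCount G 4 s(u, x2) = 2 := by
    rw [eps4 hAux2 hNu2 hNx2 (Ne.symm hvx2) (Ne.symm hx) hvx1 huy1 hum hy1m,
      ind_pos hAvy1, ind_neg hnvm, ind_pos h11, ind_neg hnx1m]
  -- ε(x2, y1) = 2
  have hNx2' : G.neighborSet x2 = {y1, u, m} := by rw [hNx2]; exact set_swap12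
  have hNy1' : G.neighborSet y1 = {x2, v, x1} := by rw [hNy1]; exact set_rot
  have hnmv : ¬ G.Adj m v := fun h => hnvm h.symm
  have hnmx1 : ¬ G.Adj m x1 := fun h => hnx1m h.symm
  have e3 : girthCycleCount G 4 s(x2, y1) = 2 := by
    rw [eps4 h21 hNx2' hNy1' huy1.symm hy1m hum (Ne.symm hvx2) (Ne.symm hx) hvx1,
      ind_pos huv, ind_pos hAux1, ind_neg hnmv, ind_neg hnmx1]
  -- signatures
  have hsu : ({a, b, 3} : Multiset ℕ) = {3, 3, 2} := by
    rw [← hsig u, sig_eq hNu hvx1 hvx2 hx, hc3, e1, e2]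
  have hsx2 : ({a, b, 3} : Multiset ℕ) =
      {2, 2, girthCycleCount G 4 s(x2, m)} := by
    rw [← hsig x2, sig_eq hNx2 huy1 hum hy1m]
    rw [show s(x2, u) = s(u, x2) from Sym2.eq_swap, e2, e3]
  exact sig_contra hsu hsx2

lemma girth4_main [Fintype V] {G : SimpleGraph V} {a b : ℕ}
    (hcub : ∀ w : V, (G.neighborSet w).ncard = 3)
    (hgirth : G.egirth = (4 : ℕ∞))
    (hsig : ∀ w : V, vertexSignature G 4 w = {a, b, 3}) : False := by
  have h34 : (3 : ℕ∞) < (4 : ℕ∞) := by norm_num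
  rw [← hgirth] at h34
  have hT : ∀ {p q r : V}, G.Adj p q → G.Adj q r → ¬ G.Adj p r := fun h1 h2 => triangle_free h34 h1 h2
  obtain ⟨u⟩ : Nonempty V := exists_vertex (by norm_num) hgirth
  -- an incident edge with count 3
  have h3 : (3 : ℕ) ∈ vertexSignature G 4 u := by rw [hsig u]; simp
  rw [vertexSignature] at h3
  obtain ⟨v, hv, hcnt⟩ := Multiset.mem_map.mp h3
  have huv : G.Adj u v := by
    have : v ∈ (G.neighborSet u).toFinite.toFinset := hv
    rwa [Set.Finite.mem_toFinset] at this
  obtain ⟨x1, x2, hvx1, hvx2, hx, hNu⟩ := cubic_nbrs (hcub u) huv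
  obtain ⟨y1, y2, huy1, huy2, hy, hNv⟩ := cubic_nbrs (hcub v) huv.symm
  have heps := eps4 huv hNu hNv hvx1 hvx2 hx huy1 huy2 hy
  rw [hcnt] at heps
  have hNu' : G.neighborSet u = {v, x2, x1} := by rw [hNu]; exact set_swap23
  have hNv' : G.neighborSet v = {u, y2, y1} := by rw [hNv]; exact set_swap23
  rcases extract_three heps.symm with ⟨hn, hA, hB, hC⟩ | ⟨hn, hA, hB, hC⟩ |
      ⟨hn, hA, hB, hC⟩ | ⟨hn, hA, hB, hC⟩
  · -- ¬ x1y1 : missing pair (x1,y1); use (x2, x1) × (y2, y1)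
    exact conf4 hcub @hT hsig huv hNu' hNv' hvx2 hvx1 (Ne.symm hx) huy2 huy1 (Ne.symm hy)
      hcnt hC hB hA hn
  · -- ¬ x1y2 : a-side (x2,x1), b-side (y1,y2)
    exact conf4 hcub @hT hsig huv hNu' hNv hvx2 hvx1 (Ne.symm hx) huy1 huy2 hy
      hcnt hB hC hA hn
  · -- ¬ x2y1 : a-side (x1,x2), b-side (y2,y1)
    exact conf4 hcub @hT hsig huv hNu hNv' hvx1 hvx2 hx huy2 huy1 (Ne.symm hy)
      hcnt hB hA hC hn
  · -- ¬ x2y2 : direct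
    exact conf4 hcub @hT hsig huv hNu hNv hvx1 hvx2 hx huy1 huy2 hy
      hcnt hA hB hC hn

lemma count_swap {G : SimpleGraph V} (g : ℕ) (a b : V) :
    girthCycleCount G g s(a, b) = girthCycleCount G g s(b, a) := by
  rw [Sym2.eq_swap]

lemma m2xy {x y : ℕ} (h : ({2, x, y} : Multiset ℕ) = {2, 3, 3}) : x = 3 ∧ y = 3 := by
  have h' : (x ::ₘ {y} : Multiset ℕ) = 3 ::ₘ {3} := by
    have := (Multiset.cons_inj_right (2 : ℕ)).mp h
    simpa [Multiset.insert_eq_cons] using this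
  exact m33 h'

lemma m3xy {x y : ℕ} (h : ({3, x, y} : Multiset ℕ) = {2, 3, 3}) :
    (x = 2 ∧ y = 3) ∨ (x = 3 ∧ y = 2) := by
  have h2 : ({2, 3, 3} : Multiset ℕ) = 3 ::ₘ {2, 3} := by decide
  have h' : (x ::ₘ {y} : Multiset ℕ) = 2 ::ₘ {3} := by
    have := (Multiset.cons_inj_right (3 : ℕ)).mp (h.trans h2)
    simpa [Multiset.insert_eq_cons] using this
  exact m23 h'

/-- at a vertex `a` with signature `{2,3,3}` whose edge to `b` has count 2,
the other two edges have count 3. -/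
lemma sig233_of2 [Fintype V] {G : SimpleGraph V} {a b c d : V}
    (hsig : vertexSignature G 5 a = {2, 3, 3})
    (hN : G.neighborSet a = {b, c, d}) (hbc : b ≠ c) (hbd : b ≠ d) (hcd : c ≠ d)
    (h2 : girthCycleCount G 5 s(a, b) = 2) :
    girthCycleCount G 5 s(a, c) = 3 ∧ girthCycleCount G 5 s(a, d) = 3 := by
  have h := hsig
  rw [sig_eq hN hbc hbd hcd, h2] at h
  exact m2xy h

lemma sig233_of3 [Fintype V] {G : SimpleGraph V} {a b c d : V}
    (hsig : vertexSignature G 5 a = {2, 3, 3})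
    (hN : G.neighborSet a = {b, c, d}) (hbc : b ≠ c) (hbd : b ≠ d) (hcd : c ≠ d)
    (h3 : girthCycleCount G 5 s(a, b) = 3) :
    (girthCycleCount G 5 s(a, c) = 2 ∧ girthCycleCount G 5 s(a, d) = 3) ∨
    (girthCycleCount G 5 s(a, c) = 3 ∧ girthCycleCount G 5 s(a, d) = 2) := by
  have h := hsig
  rw [sig_eq hN hbc hbd hcd, h3] at h
  exact m3xy h

lemma sig233_mem [Fintype V] {G : SimpleGraph V} {a b c d : V}
    (hsig : vertexSignature G 5 a = {2, 3, 3})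
    (hN : G.neighborSet a = {b, c, d}) (hbc : b ≠ c) (hbd : b ≠ d) (hcd : c ≠ d) :
    girthCycleCount G 5 s(a, c) = 2 ∨ girthCycleCount G 5 s(a, c) = 3 := by
  have h := hsig
  rw [sig_eq hN hbc hbd hcd] at h
  exact (mem233 h).2.1

lemma main5 [Fintype V] {G : SimpleGraph V} {u v x1 x2 y1 y2 w1 w2 z1 z2 : V}
    (hcub : ∀ w : V, (G.neighborSet w).ncard = 3)
    (hT : ∀ {a b c : V}, G.Adj a b → G.Adj b c → ¬ G.Adj a c)
    (hQ : ∀ {a b c d : V}, G.Adj a b → G.Adj b c → G.Adj c d → G.Adj d a → a = c ∨ b = d)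
    (hsig : ∀ w : V, vertexSignature G 5 w = {2, 3, 3})
    (huv : G.Adj u v)
    (hNu : G.neighborSet u = {v, x1, x2}) (hNv : G.neighborSet v = {u, y1, y2})
    (hNx1 : G.neighborSet x1 = {u, w1, w2}) (hNx2 : G.neighborSet x2 = {u, z1, z2})
    (hvx1 : v ≠ x1) (hvx2 : v ≠ x2) (hx : x1 ≠ x2)
    (huy1 : u ≠ y1) (huy2 : u ≠ y2) (hy : y1 ≠ y2)
    (huw1 : u ≠ w1) (huw2 : u ≠ w2) (hw : w1 ≠ w2)
    (huz1 : u ≠ z1) (huz2 : u ≠ z2) (hz : z1 ≠ z2)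
    (hE0 : girthCycleCount G 5 s(u, v) = 2)
    (hO1 : G.Adj y1 w2 ∧ ¬G.Adj y1 w1 ∧ ¬G.Adj y2 w1 ∧ ¬G.Adj y2 w2)
    (hO2 : G.Adj y2 z2 ∧ ¬G.Adj y1 z1 ∧ ¬G.Adj y1 z2 ∧ ¬G.Adj y2 z1)
    (hO3 : (G.Adj w1 z1 ∧ G.Adj w2 z2 ∧ ¬G.Adj w1 z2 ∧ ¬G.Adj w2 z1) ∨
           (G.Adj w1 z2 ∧ G.Adj w2 z1 ∧ ¬G.Adj w1 z1 ∧ ¬G.Adj w2 z2)) : False := by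
  obtain ⟨hAy1w2, hny1w1, hny2w1, hny2w2⟩ := hO1
  obtain ⟨hAy2z2, hny1z1, hny1z2, hny2z1⟩ := hO2
  -- adjacency pool
  have hAux1 : G.Adj u x1 := (adj_iff_of_nbhd hNu).mpr (Or.inr (Or.inl rfl))
  have hAux2 : G.Adj u x2 := (adj_iff_of_nbhd hNu).mpr (Or.inr (Or.inr rfl))
  have hAvy1 : G.Adj v y1 := (adj_iff_of_nbhd hNv).mpr (Or.inr (Or.inl rfl))
  have hAvy2 : G.Adj v y2 := (adj_iff_of_nbhd hNv).mpr (Or.inr (Or.inr rfl))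
  have hAx1w1 : G.Adj x1 w1 := (adj_iff_of_nbhd hNx1).mpr (Or.inr (Or.inl rfl))
  have hAx1w2 : G.Adj x1 w2 := (adj_iff_of_nbhd hNx1).mpr (Or.inr (Or.inr rfl))
  have hAx2z1 : G.Adj x2 z1 := (adj_iff_of_nbhd hNx2).mpr (Or.inr (Or.inl rfl))
  have hAx2z2 : G.Adj x2 z2 := (adj_iff_of_nbhd hNx2).mpr (Or.inr (Or.inr rfl))
  -- triangle-free non-adjacencies
  have hnvx1 : ¬ G.Adj v x1 := hT huv.symm hAux1
  have hnvx2 : ¬ G.Adj v x2 := hT huv.symm hAux2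
  have hnuy1 : ¬ G.Adj u y1 := hT huv hAvy1
  have hnuy2 : ¬ G.Adj u y2 := hT huv hAvy2
  have hnx12 : ¬ G.Adj x1 x2 := hT hAux1.symm hAux2
  have hny12 : ¬ G.Adj y1 y2 := hT hAvy1.symm hAvy2
  have hnuw1 : ¬ G.Adj u w1 := hT hAux1 hAx1w1
  have hnuw2 : ¬ G.Adj u w2 := hT hAux1 hAx1w2
  have hnuz1 : ¬ G.Adj u z1 := hT hAux2 hAx2z1
  have hnuz2 : ¬ G.Adj u z2 := hT hAux2 hAx2z2
  -- distinctness pool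
  have hx1y1 : x1 ≠ y1 := by rintro rfl; exact hnuy1 hAux1
  have hx1y2 : x1 ≠ y2 := by rintro rfl; exact hnuy2 hAux1
  have hx2y1 : x2 ≠ y1 := by rintro rfl; exact hnuy1 hAux2
  have hx2y2 : x2 ≠ y2 := by rintro rfl; exact hnuy2 hAux2
  have hvw1 : v ≠ w1 := by rintro rfl; exact hnvx1 hAx1w1.symm
  have hvw2 : v ≠ w2 := by rintro rfl; exact hnvx1 hAx1w2.symm
  have hvz1 : v ≠ z1 := by rintro rfl; exact hnvx2 hAx2z1.symm
  have hvz2 : v ≠ z2 := by rintro rfl; exact hnvx2 hAx2z2.symm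
  have hx2w1 : x2 ≠ w1 := by rintro rfl; exact hnx12 hAx1w1
  have hx2w2 : x2 ≠ w2 := by rintro rfl; exact hnx12 hAx1w2
  have hx1z1 : x1 ≠ z1 := by rintro rfl; exact hnx12 hAx2z1.symm
  have hx1z2 : x1 ≠ z2 := by rintro rfl; exact hnx12 hAx2z2.symm
  -- 4-cycle-freeness non-adjacencies
  have hnx1y1 : ¬ G.Adj x1 y1 := by
    intro h
    rcases hQ huv hAvy1 h.symm hAux1.symm with h' | h'
    · exact huy1 h'
    · exact hvx1 h'
  have hnx1y2 : ¬ G.Adj x1 y2 := by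
    intro h
    rcases hQ huv hAvy2 h.symm hAux1.symm with h' | h'
    · exact huy2 h'
    · exact hvx1 h'
  have hnx2y1 : ¬ G.Adj x2 y1 := by
    intro h
    rcases hQ huv hAvy1 h.symm hAux2.symm with h' | h'
    · exact huy1 h'
    · exact hvx2 h'
  have hnx2y2 : ¬ G.Adj x2 y2 := by
    intro h
    rcases hQ huv hAvy2 h.symm hAux2.symm with h' | h'
    · exact huy2 h'
    · exact hvx2 h'
  have hnvw1 : ¬ G.Adj v w1 := by
    intro h
    rcases hQ huv h hAx1w1.symm hAux1.symm with h' | h'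
    · exact huw1 h'
    · exact hvx1 h'
  have hnvw2 : ¬ G.Adj v w2 := by
    intro h
    rcases hQ huv h hAx1w2.symm hAux1.symm with h' | h'
    · exact huw2 h'
    · exact hvx1 h'
  have hnvz1 : ¬ G.Adj v z1 := by
    intro h
    rcases hQ huv h hAx2z1.symm hAux2.symm with h' | h'
    · exact huz1 h'
    · exact hvx2 h'
  have hnvz2 : ¬ G.Adj v z2 := by
    intro h
    rcases hQ huv h hAx2z2.symm hAux2.symm with h' | h'
    · exact huz2 h'
    · exact hvx2 h'
  have hnx2w1 : ¬ G.Adj x2 w1 := by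
    intro h
    rcases hQ hAux2 h hAx1w1.symm hAux1.symm with h' | h'
    · exact huw1 h'
    · exact hx h'.symm
  have hnx2w2 : ¬ G.Adj x2 w2 := by
    intro h
    rcases hQ hAux2 h hAx1w2.symm hAux1.symm with h' | h'
    · exact huw2 h'
    · exact hx h'.symm
  have hnx1z1 : ¬ G.Adj x1 z1 := by
    intro h
    rcases hQ hAux1 h hAx2z1.symm hAux2.symm with h' | h'
    · exact huz1 h'
    · exact hx h'
  have hnx1z2 : ¬ G.Adj x1 z2 := by
    intro h
    rcases hQ hAux1 h hAx2z2.symm hAux2.symm with h' | h'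
    · exact huz2 h'
    · exact hx h'
  -- more distinctness
  have hy1z1 : y1 ≠ z1 := by rintro rfl; exact hnx2y1 hAx2z1
  have hy1z2 : y1 ≠ z2 := by rintro rfl; exact hnx2y1 hAx2z2
  have hy2z1 : y2 ≠ z1 := by rintro rfl; exact hnx2y2 hAx2z1
  have hy1w1 : y1 ≠ w1 := by rintro rfl; exact hnx1y1 hAx1w1
  have hy2w2ne : y2 ≠ w2 := by rintro rfl; exact hnx1y2 hAx1w2
  -- the ε = 3 facts at u and v
  obtain ⟨hEux1, hEux2⟩ := sig233_of2 (hsig u) hNu hvx1 hvx2 hx hE0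
  have hE0' : girthCycleCount G 5 s(v, u) = 2 := (count_swap 5 v u).trans hE0
  obtain ⟨hEvy1, hEvy2⟩ := sig233_of2 (hsig v) hNv huy1 huy2 hy hE0'
  -- third neighbours of y1 and y2
  obtain ⟨π, hvπ, hw2π, hNy1'⟩ :
      ∃ π, v ≠ π ∧ w2 ≠ π ∧ G.neighborSet y1 = {v, w2, π} := by
    obtain ⟨p1, p2, hvp1, hvp2, hp, hNy1⟩ := cubic_nbrs (hcub y1) hAvy1.symm
    have hmem : w2 ∈ G.neighborSet y1 := hAy1w2
    rw [hNy1] at hmem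
    rcases hmem with h' | h' | h'
    · exact absurd h' (Ne.symm hvw2)
    · exact ⟨p2, hvp2, by rw [h']; exact hp, by rw [hNy1, ← h']⟩
    · exact ⟨p1, hvp1, by rw [h']; exact hp.symm, by rw [hNy1, ← h', set_swap23]⟩
  obtain ⟨τ, hvτ, hz2τ, hNy2'⟩ :
      ∃ τ, v ≠ τ ∧ z2 ≠ τ ∧ G.neighborSet y2 = {v, z2, τ} := by
    obtain ⟨q1, q2, hvq1, hvq2, hq, hNy2⟩ := cubic_nbrs (hcub y2) hAvy2.symm
    have hmem : z2 ∈ G.neighborSet y2 := hAy2z2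
    rw [hNy2] at hmem
    rcases hmem with h' | h' | h'
    · exact absurd h' (Ne.symm hvz2)
    · exact ⟨q2, hvq2, by rw [h']; exact hq, by rw [hNy2, ← h']⟩
    · exact ⟨q1, hvq1, by rw [h']; exact hq.symm, by rw [hNy2, ← h', set_swap23]⟩
  have hAy1π : G.Adj y1 π := (adj_iff_of_nbhd hNy1').mpr (Or.inr (Or.inr rfl))
  have hAy2τ : G.Adj y2 τ := (adj_iff_of_nbhd hNy2').mpr (Or.inr (Or.inr rfl))
  -- π / τ distinctness facts
  have hπτ : π ≠ τ := by
    rintro rfl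
    rcases hQ hAvy1 hAy1π hAy2τ.symm hAvy2.symm with h' | h'
    · exact hvπ h'
    · exact hy h'
  have hπx1 : π ≠ x1 := by rintro rfl; exact hnx1y1 hAy1π.symm
  have hπx2 : π ≠ x2 := by rintro rfl; exact hnx2y1 hAy1π.symm
  have hτx1 : τ ≠ x1 := by rintro rfl; exact hnx1y2 hAy2τ.symm
  have hτx2 : τ ≠ x2 := by rintro rfl; exact hnx2y2 hAy2τ.symm
  have hπy2 : π ≠ y2 := by rintro rfl; exact hny12 hAy1π
  have hτy1 : τ ≠ y1 := by rintro rfl; exact hny12 hAy2τ.symm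
  have hπz1 : z1 ≠ π := by rintro rfl; exact hny1z1 hAy1π
  have hw1τ : w1 ≠ τ := by rintro rfl; exact hny2w1 hAy2τ
  have hτz1 : τ ≠ z1 := by rintro rfl; exact hny2z1 hAy2τ
  have hτw2 : τ ≠ w2 := by rintro rfl; exact hny2w2 hAy2τ
  -- SYS at (v, u)
  obtain ⟨O1v, O2v, O3v⟩ := SYS @hT @hQ huv.symm hNv hNu hNy1' hNy2'
    huy1 huy2 hy hvx1 hvx2 hx hvw2 hvπ hw2π hvz2 hvτ hz2τ hE0' hEvy1 hEvy2
  -- resolve O1v using Adj x1 w2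
  have hnx1π : ¬ G.Adj x1 π ∧ ¬ G.Adj x2 π := by
    rcases O1v with ⟨-, h1, -, h2⟩ | ⟨-, h', -, -⟩ | ⟨-, h', -, -⟩ | ⟨-, h', -, -⟩
    · exact ⟨h1, h2⟩
    · exact absurd hAx1w2 h'
    · exact absurd hAx1w2 h'
    · exact absurd hAx1w2 h'
  obtain ⟨hnx1π, hnx2π⟩ := hnx1π
  have hnτ : ¬ G.Adj x1 τ ∧ ¬ G.Adj x2 τ := by
    rcases O2v with ⟨-, -, h', -⟩ | ⟨-, -, h', -⟩ | ⟨-, -, h1, h2⟩ | ⟨-, -, -, h'⟩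
    · exact absurd hAx2z2 h'
    · exact absurd hAx2z2 h'
    · exact ⟨h1, h2⟩
    · exact absurd hAx2z2 h'
  obtain ⟨hnx1τ, hnx2τ⟩ := hnτ
  -- M(x1): count (x1,w1) = 2, count (x1,w2) = 3
  have hEx1u : girthCycleCount G 5 s(x1, u) = 3 := (count_swap 5 x1 u).trans hEux1
  have hMx1 : girthCycleCount G 5 s(x1, w1) = 2 ∧ girthCycleCount G 5 s(x1, w2) = 3 := by
    rcases sig233_of3 (hsig x1) hNx1 huw1 huw2 hw hEx1u with ⟨h1, h2⟩ | ⟨h1, h2⟩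
    · exact ⟨h1, h2⟩
    · exfalso
      obtain ⟨g1, g2, hg1, hg2, hg, hNw2⟩ := cubic_nbrs (hcub w2) hAx1w2.symm
      obtain ⟨r1, r2, hr1, hr2, hr, hNw1⟩ := cubic_nbrs (hcub w1) hAx1w1.symm
      have hNx1' : G.neighborSet x1 = {w2, u, w1} := by rw [hNx1]; exact set_rot
      have hNu' : G.neighborSet u = {x1, v, x2} := by rw [hNu]; exact set_swap12
      obtain ⟨-, -, O3x⟩ := SYS @hT @hQ hAx1w2 hNx1' hNw2 hNu' hNw1
        (Ne.symm huw2) hw.symm huw1 hg1 hg2 hg (Ne.symm hvx1) hx hvx2 hr1 hr2 hr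
        h2 hEx1u h1
      have hAw1r1 : G.Adj w1 r1 := (adj_iff_of_nbhd hNw1).mpr (Or.inr (Or.inl rfl))
      have hAw1r2 : G.Adj w1 r2 := (adj_iff_of_nbhd hNw1).mpr (Or.inr (Or.inr rfl))
      have key : ∀ r, G.Adj v r → G.Adj w1 r → False := by
        intro r hvr hw1r
        rcases (adj_iff_of_nbhd hNv).mp hvr with h' | h' | h'
        · exact hnuw1 (h' ▸ hw1r).symm
        · exact hny1w1 (h' ▸ hw1r).symm
        · exact hny2w1 (h' ▸ hw1r).symm
      rcases O3x with ⟨ha, -, -, -⟩ | ⟨ha, -, -, -⟩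
      · exact key r1 ha hAw1r1
      · exact key r2 ha hAw1r2
  obtain ⟨hEx1w1, hEx1w2⟩ := hMx1
  -- case analysis on the w–z matching
  rcases hO3 with ⟨hAw1z1, hAw2z2, hnw1z2, hnw2z1⟩ | ⟨hAw1z2, hAw2z1, hnw1z1, hnw2z2⟩
  · -- Case I
    have hNw2full : G.neighborSet w2 = {x1, y1, z2} :=
      nbhd_eq_of_adj (hcub w2) hx1y1 hx1z2 hy1z2 hAx1w2.symm hAy1w2.symm hAw2z2
    have hNz2full : G.neighborSet z2 = {x2, y2, w2} :=
      nbhd_eq_of_adj (hcub z2) hx2y2 hx2w2 hy2w2ne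
        hAx2z2.symm hAy2z2.symm hAw2z2.symm
    have hEw2x1 : girthCycleCount G 5 s(w2, x1) = 3 := (count_swap 5 w2 x1).trans hEx1w2
    rcases sig233_of3 (hsig w2) hNw2full hx1y1 hx1z2 hy1z2 hEw2x1 with
        ⟨hEw2y1, hEw2z2⟩ | ⟨hEw2y1, hEw2z2⟩
    · -- Sub I.2 : ε(w2,y1) = 2 : contradiction
      have hNw2' : G.neighborSet w2 = {y1, x1, z2} := by rw [hNw2full]; exact set_swap12
      have hNy1'' : G.neighborSet y1 = {w2, v, π} := by rw [hNy1']; exact set_swap12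
      have hNx1'' : G.neighborSet x1 = {w2, u, w1} := by rw [hNx1]; exact set_rot
      have hNz2'' : G.neighborSet z2 = {w2, x2, y2} := by rw [hNz2full]; exact set_rot
      obtain ⟨-, -, O3w⟩ := SYS @hT @hQ hAy1w2.symm hNw2' hNy1'' hNx1'' hNz2''
        (Ne.symm hx1y1) hy1z2 hx1z2 (Ne.symm hvw2) hw2π hvπ
        (Ne.symm huw2) hw.symm huw1 (Ne.symm hx2w2) (Ne.symm hy2w2ne) hx2y2
        hEw2y1 hEw2x1 hEw2z2
      rcases O3w with ⟨-, hb, -, -⟩ | ⟨ha, -, -, -⟩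
      · exact hny2w1 hb.symm
      · exact hnuy2 ha
    · -- Sub I.1 : ε(w2,z2) = 2
      have hnuτ : ¬ G.Adj u τ := by
        intro h
        rcases (adj_iff_of_nbhd hNu).mp h with h' | h' | h'
        · exact hvτ h'.symm
        · exact hτx1 h'
        · exact hτx2 h'
      have hnuπ : ¬ G.Adj u π := by
        intro h
        rcases (adj_iff_of_nbhd hNu).mp h with h' | h' | h'
        · exact hvπ h'.symm
        · exact hπx1 h'
        · exact hπx2 h'
      -- SYS at (w2, z2)
      have hNw2' : G.neighborSet w2 = {z2, x1, y1} := by rw [hNw2full]; exact set_rot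
      have hNz2'' : G.neighborSet z2 = {w2, x2, y2} := by rw [hNz2full]; exact set_rot
      have hNx1'' : G.neighborSet x1 = {w2, u, w1} := by rw [hNx1]; exact set_rot
      have hNy1'' : G.neighborSet y1 = {w2, v, π} := by rw [hNy1']; exact set_swap12
      obtain ⟨-, -, O3a⟩ := SYS @hT @hQ hAw2z2 hNw2' hNz2'' hNx1'' hNy1''
        (Ne.symm hx1z2) (Ne.symm hy1z2) hx1y1 (Ne.symm hx2w2) (Ne.symm hy2w2ne) hx2y2
        (Ne.symm huw2) hw.symm huw1 (Ne.symm hvw2) hw2π hvπ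
        hEw2z2 hEw2x1 hEw2y1
      have hAw1π : G.Adj w1 π := by
        rcases O3a with ⟨-, hb, -, -⟩ | ⟨ha, -, -, -⟩
        · exact hb
        · exact absurd ha hnuπ
      -- SYS at (z2, w2)
      have hEz2w2 : girthCycleCount G 5 s(z2, w2) = 2 := (count_swap 5 z2 w2).trans hEw2z2
      obtain ⟨hEz2x2, hEz2y2⟩ := sig233_of2 (hsig z2) hNz2''
        (Ne.symm hx2w2) (Ne.symm hy2w2ne) hx2y2 hEz2w2
      have hNx2'' : G.neighborSet x2 = {z2, u, z1} := by rw [hNx2]; exact set_rot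
      have hNy2'' : G.neighborSet y2 = {z2, v, τ} := by rw [hNy2']; exact set_swap12
      obtain ⟨-, -, O3b⟩ := SYS @hT @hQ hAw2z2.symm hNz2'' hNw2' hNx2'' hNy2''
        (Ne.symm hx2w2) (Ne.symm hy2w2ne) hx2y2
        (Ne.symm hx1z2) (Ne.symm hy1z2) hx1y1
        (Ne.symm huz2) hz.symm huz1 (Ne.symm hvz2) hz2τ hvτ
        hEz2w2 hEz2x2 hEz2y2
      have hAz1τ : G.Adj z1 τ := by
        rcases O3b with ⟨-, hb, -, -⟩ | ⟨ha, -, -, -⟩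
        · exact hb
        · exact absurd ha hnuτ
      -- resolve O3v
      have hnw2τ : ¬ G.Adj w2 τ := by
        intro h
        rcases (adj_iff_of_nbhd hNw2full).mp h with h' | h' | h'
        · exact hτx1 h'
        · exact hτy1 h'
        · exact hz2τ h'.symm
      have hAπτ : G.Adj π τ := by
        rcases O3v with ⟨-, hb, -, -⟩ | ⟨ha, -, -, -⟩
        · exact hb
        · exact absurd ha hnw2τ
      -- full neighbourhoods of w1, z1, π
      have hNw1full : G.neighborSet w1 = {x1, z1, π} :=
        nbhd_eq_of_adj (hcub w1) hx1z1 (Ne.symm hπx1) hπz1 hAx1w1.symm hAw1z1 hAw1π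
      have hNz1full : G.neighborSet z1 = {x2, w1, τ} :=
        nbhd_eq_of_adj (hcub z1) hx2w1 (Ne.symm hτx2) hw1τ hAx2z1.symm hAw1z1.symm hAz1τ
      have hNπfull : G.neighborSet π = {y1, w1, τ} :=
        nbhd_eq_of_adj (hcub π) hy1w1 (Ne.symm hτy1) hw1τ hAy1π.symm hAw1π.symm hAπτ
      -- negative adjacency facts for the final count
      have hnw1τ : ¬ G.Adj w1 τ := by
        intro h
        rcases (adj_iff_of_nbhd hNw1full).mp h with h' | h' | h'
        · exact hτx1 h'
        · exact hτz1 h'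
        · exact hπτ h'.symm
      have hny1τ : ¬ G.Adj y1 τ := by
        intro h
        rcases (adj_iff_of_nbhd hNy1').mp h with h' | h' | h'
        · exact hvτ h'.symm
        · exact hτw2 h'
        · exact hπτ h'.symm
      have hny1x2' : ¬ G.Adj y1 x2 := fun h => hnx2y1 h.symm
      have hnw1x2 : ¬ G.Adj w1 x2 := fun h => hnx2w1 h.symm
      have hnτx2' : ¬ G.Adj τ x2 := fun h => hnx2τ h.symm
      -- final count ε(w1,z1) = 1
      have hNw1' : G.neighborSet w1 = {z1, x1, π} := by rw [hNw1full]; exact set_swap12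
      have hNz1' : G.neighborSet z1 = {w1, x2, τ} := by rw [hNz1full]; exact set_swap12
      have heps := eps5 @hT @hQ hAw1z1 hNw1' hNz1'
        (Ne.symm hx1z1) hπz1 (Ne.symm hπx1)
        (Ne.symm hx2w1) hw1τ (Ne.symm hτx2)
      have hCN1 : CN G x1 x2 := ⟨u, hAux1.symm, hAux2⟩
      have hCN2 : ¬ CN G x1 τ := by
        rw [cn_unfold hNx1 hnuτ]
        rintro (h | h)
        · exact hnw1τ h
        · exact hnw2τ h
      have hCN3 : ¬ CN G π x2 := by
        rw [cn_unfold hNπfull hny1x2']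
        rintro (h | h)
        · exact hnw1x2 h
        · exact hnτx2' h
      have hCN4 : ¬ CN G π τ := by
        rw [cn_unfold hNπfull hny1τ]
        rintro (h | h)
        · exact hnw1τ h
        · exact G.irrefl h
      have hval : girthCycleCount G 5 s(w1, z1) = 1 := by
        rw [heps, ind_pos hCN1, ind_neg hCN2, ind_neg hCN3, ind_neg hCN4]
      rcases sig233_mem (hsig w1) hNw1full hx1z1 (Ne.symm hπx1) hπz1 with h | h <;> omega
  · -- Case II
    have hNw2full : G.neighborSet w2 = {x1, y1, z1} :=
      nbhd_eq_of_adj (hcub w2) hx1y1 hx1z1 hy1z1 hAx1w2.symm hAy1w2.symm hAw2z1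
    rcases O3v with ⟨ha, -, -, -⟩ | ⟨ha, -, -, -⟩
    · -- Adj w2 z2 impossible
      rcases (adj_iff_of_nbhd hNw2full).mp ha with h' | h' | h'
      · exact hx1z2 h'.symm
      · exact hy1z2 h'.symm
      · exact hz h'.symm
    · -- Adj w2 τ impossible
      rcases (adj_iff_of_nbhd hNw2full).mp ha with h' | h' | h'
      · exact hτx1 h'
      · exact hτy1 h'
      · exact hτz1 h'


lemma same_y {G : SimpleGraph V} {v x1 x2 yy p1 p2 wk zl : V}
    (hNyy : G.neighborSet yy = {v, p1, p2})
    (hO : (G.Adj x1 p1 ∧ ¬G.Adj x1 p2 ∧ ¬G.Adj x2 p1 ∧ ¬G.Adj x2 p2) ∨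
          (G.Adj x1 p2 ∧ ¬G.Adj x1 p1 ∧ ¬G.Adj x2 p1 ∧ ¬G.Adj x2 p2) ∨
          (G.Adj x2 p1 ∧ ¬G.Adj x1 p1 ∧ ¬G.Adj x1 p2 ∧ ¬G.Adj x2 p2) ∨
          (G.Adj x2 p2 ∧ ¬G.Adj x1 p1 ∧ ¬G.Adj x1 p2 ∧ ¬G.Adj x2 p1))
    (hAx1wk : G.Adj x1 wk) (hAx2zl : G.Adj x2 zl)
    (hAyywk : G.Adj yy wk) (hAyyzl : G.Adj yy zl)
    (hvwk : v ≠ wk) (hvzl : v ≠ zl) (hkl : wk ≠ zl) : False := by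
  have hm1 : wk ∈ G.neighborSet yy := hAyywk
  have hm2 : zl ∈ G.neighborSet yy := hAyyzl
  rw [hNyy] at hm1 hm2
  rcases hm1 with h1 | h1 | h1
  · exact hvwk h1.symm
  · rcases hm2 with h2 | h2 | h2
    · exact hvzl h2.symm
    · exact hkl (h1.trans h2.symm)
    · rw [h1] at hAx1wk
      rw [h2] at hAx2zl
      rcases hO with ⟨-, -, -, hn⟩ | ⟨-, hn, -, -⟩ | ⟨-, hn, -, -⟩ | ⟨-, hn, -, -⟩
      · exact hn hAx2zl
      · exact hn hAx1wk
      · exact hn hAx1wk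
      · exact hn hAx1wk
  · rcases hm2 with h2 | h2 | h2
    · exact hvzl h2.symm
    · rw [h1] at hAx1wk
      rw [h2] at hAx2zl
      rcases hO with ⟨-, hn, -, -⟩ | ⟨-, -, hn, -⟩ | ⟨-, -, hn, -⟩ | ⟨-, -, hn, -⟩
      · exact hn hAx1wk
      · exact hn hAx2zl
      · exact hn hAx1wk
      · exact hn hAx1wk
    · exact hkl (h1.trans h2.symm)


lemma girth5_main {V : Type*} [Fintype V] {G : SimpleGraph V}
    (hcub : ∀ w : V, (G.neighborSet w).ncard = 3)
    (hgirth : G.egirth = (5 : ℕ∞))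
    (hsig : ∀ w : V, vertexSignature G 5 w = {2, 3, 3}) : False := by
  have h35 : (3 : ℕ∞) < (5 : ℕ∞) := by norm_num
  have h45 : (4 : ℕ∞) < (5 : ℕ∞) := by norm_num
  rw [← hgirth] at h35 h45
  have hT : ∀ {a b c : V}, G.Adj a b → G.Adj b c → ¬ G.Adj a c :=
    fun h1 h2 => triangle_free h35 h1 h2
  have hQ : ∀ {a b c d : V}, G.Adj a b → G.Adj b c → G.Adj c d → G.Adj d a → a = c ∨ b = d :=
    fun h1 h2 h3 h4 => quad_free h45 h1 h2 h3 h4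
  obtain ⟨u⟩ : Nonempty V := exists_vertex (by norm_num) hgirth
  have h2m : (2 : ℕ) ∈ vertexSignature G 5 u := by rw [hsig u]; simp
  rw [vertexSignature] at h2m
  obtain ⟨v, hv, hcnt⟩ := Multiset.mem_map.mp h2m
  have huv : G.Adj u v := by
    have : v ∈ (G.neighborSet u).toFinite.toFinset := hv
    rwa [Set.Finite.mem_toFinset] at this
  obtain ⟨x1, x2, hvx1, hvx2, hx, hNu⟩ := cubic_nbrs (hcub u) huv
  obtain ⟨y1, y2, huy1, huy2, hy, hNv⟩ := cubic_nbrs (hcub v) huv.symm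
  have hAux1 : G.Adj u x1 := (adj_iff_of_nbhd hNu).mpr (Or.inr (Or.inl rfl))
  have hAux2 : G.Adj u x2 := (adj_iff_of_nbhd hNu).mpr (Or.inr (Or.inr rfl))
  have hAvy1 : G.Adj v y1 := (adj_iff_of_nbhd hNv).mpr (Or.inr (Or.inl rfl))
  have hAvy2 : G.Adj v y2 := (adj_iff_of_nbhd hNv).mpr (Or.inr (Or.inr rfl))
  obtain ⟨w1, w2, huw1, huw2, hw, hNx1⟩ := cubic_nbrs (hcub x1) hAux1.symm
  obtain ⟨z1, z2, huz1, huz2, hz, hNx2⟩ := cubic_nbrs (hcub x2) hAux2.symm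
  have hAx1w1 : G.Adj x1 w1 := (adj_iff_of_nbhd hNx1).mpr (Or.inr (Or.inl rfl))
  have hAx1w2 : G.Adj x1 w2 := (adj_iff_of_nbhd hNx1).mpr (Or.inr (Or.inr rfl))
  have hAx2z1 : G.Adj x2 z1 := (adj_iff_of_nbhd hNx2).mpr (Or.inr (Or.inl rfl))
  have hAx2z2 : G.Adj x2 z2 := (adj_iff_of_nbhd hNx2).mpr (Or.inr (Or.inr rfl))
  have hnvx1 : ¬ G.Adj v x1 := hT huv.symm hAux1
  have hnvx2 : ¬ G.Adj v x2 := hT huv.symm hAux2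
  have hnx12 : ¬ G.Adj x1 x2 := hT hAux1.symm hAux2
  have hvw1 : v ≠ w1 := by rintro rfl; exact hnvx1 hAx1w1.symm
  have hvw2 : v ≠ w2 := by rintro rfl; exact hnvx1 hAx1w2.symm
  have hvz1 : v ≠ z1 := by rintro rfl; exact hnvx2 hAx2z1.symm
  have hvz2 : v ≠ z2 := by rintro rfl; exact hnvx2 hAx2z2.symm
  have hnx2w1 : ¬ G.Adj x2 w1 := by
    intro h
    rcases hQ hAux2 h hAx1w1.symm hAux1.symm with h' | h'
    · exact huw1 h'
    · exact hx h'.symm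
  have hnx2w2 : ¬ G.Adj x2 w2 := by
    intro h
    rcases hQ hAux2 h hAx1w2.symm hAux1.symm with h' | h'
    · exact huw2 h'
    · exact hx h'.symm
  have hwz11 : w1 ≠ z1 := by rintro rfl; exact hnx2w1 hAx2z1
  have hwz12 : w1 ≠ z2 := by rintro rfl; exact hnx2w1 hAx2z2
  have hwz21 : w2 ≠ z1 := by rintro rfl; exact hnx2w2 hAx2z1
  have hwz22 : w2 ≠ z2 := by rintro rfl; exact hnx2w2 hAx2z2
  obtain ⟨hEux1, hEux2⟩ := sig233_of2 (hsig u) hNu hvx1 hvx2 hx hcnt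
  have hE0' : girthCycleCount G 5 s(v, u) = 2 := (count_swap 5 v u).trans hcnt
  obtain ⟨hEvy1, hEvy2⟩ := sig233_of2 (hsig v) hNv huy1 huy2 hy hE0'
  obtain ⟨p1, p2, hvp1, hvp2, hp, hNy1⟩ := cubic_nbrs (hcub y1) hAvy1.symm
  obtain ⟨q1, q2, hvq1, hvq2, hq, hNy2⟩ := cubic_nbrs (hcub y2) hAvy2.symm
  obtain ⟨O1, O2, O3⟩ := SYS @hT @hQ huv hNu hNv hNx1 hNx2
    hvx1 hvx2 hx huy1 huy2 hy huw1 huw2 hw huz1 huz2 hz hcnt hEux1 hEux2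
  obtain ⟨O1v, O2v, -⟩ := SYS @hT @hQ huv.symm hNv hNu hNy1 hNy2
    huy1 huy2 hy hvx1 hvx2 hx hvp1 hvp2 hp hvq1 hvq2 hq hE0' hEvy1 hEvy2
  have hNvs : G.neighborSet v = {u, y2, y1} := by rw [hNv]; exact set_swap23
  have hNx1s : G.neighborSet x1 = {u, w2, w1} := by rw [hNx1]; exact set_swap23
  have hNx2s : G.neighborSet x2 = {u, z2, z1} := by rw [hNx2]; exact set_swap23
  rcases O1 with ⟨e, n12, n21, n22⟩ | ⟨e, n11, n21, n22⟩ | ⟨e, n11, n12, n22⟩ | ⟨e, n11, n12, n21⟩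
  · -- O1 case (y1, w1)
    rcases O2 with ⟨f, m12, m21, m22⟩ | ⟨f, m11, m21, m22⟩ | ⟨f, m11, m12, m22⟩ | ⟨f, m11, m12, m21⟩
    · -- O2 case (y1, z1)
      exact same_y hNy1 O1v hAx1w1 hAx2z1 e f hvw1 hvz1 hwz11
    · -- O2 case (y1, z2)
      exact same_y hNy1 O1v hAx1w1 hAx2z2 e f hvw1 hvz2 hwz12
    · -- O2 case (y2, z1)
      have O3n : (G.Adj w2 z2 ∧ G.Adj w1 z1 ∧ ¬G.Adj w2 z1 ∧ ¬G.Adj w1 z2) ∨ (G.Adj w2 z1 ∧ G.Adj w1 z2 ∧ ¬G.Adj w2 z2 ∧ ¬G.Adj w1 z1) := by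
        rcases O3 with hc | hc
        · exact Or.inl ⟨hc.2.1, hc.1, hc.2.2.2, hc.2.2.1⟩
        · exact Or.inr ⟨hc.2.1, hc.1, hc.2.2.2, hc.2.2.1⟩
      exact main5 hcub @hT @hQ hsig huv hNu hNv hNx1s hNx2s hvx1 hvx2 hx huy1 huy2 hy huw2 huw1 hw.symm huz2 huz1 hz.symm hcnt ⟨e, n12, n22, n21⟩ ⟨f, m12, m11, m22⟩ O3n
    · -- O2 case (y2, z2)
      have O3n : (G.Adj w2 z1 ∧ G.Adj w1 z2 ∧ ¬G.Adj w2 z2 ∧ ¬G.Adj w1 z1) ∨ (G.Adj w2 z2 ∧ G.Adj w1 z1 ∧ ¬G.Adj w2 z1 ∧ ¬G.Adj w1 z2) := by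
        rcases O3 with hc | hc
        · exact Or.inr ⟨hc.2.1, hc.1, hc.2.2.2, hc.2.2.1⟩
        · exact Or.inl ⟨hc.2.1, hc.1, hc.2.2.2, hc.2.2.1⟩
      exact main5 hcub @hT @hQ hsig huv hNu hNv hNx1s hNx2 hvx1 hvx2 hx huy1 huy2 hy huw2 huw1 hw.symm huz1 huz2 hz hcnt ⟨e, n12, n22, n21⟩ ⟨f, m11, m12, m21⟩ O3n
  · -- O1 case (y1, w2)
    rcases O2 with ⟨f, m12, m21, m22⟩ | ⟨f, m11, m21, m22⟩ | ⟨f, m11, m12, m22⟩ | ⟨f, m11, m12, m21⟩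
    · -- O2 case (y1, z1)
      exact same_y hNy1 O1v hAx1w2 hAx2z1 e f hvw2 hvz1 hwz21
    · -- O2 case (y1, z2)
      exact same_y hNy1 O1v hAx1w2 hAx2z2 e f hvw2 hvz2 hwz22
    · -- O2 case (y2, z1)
      have O3n : (G.Adj w1 z2 ∧ G.Adj w2 z1 ∧ ¬G.Adj w1 z1 ∧ ¬G.Adj w2 z2) ∨ (G.Adj w1 z1 ∧ G.Adj w2 z2 ∧ ¬G.Adj w1 z2 ∧ ¬G.Adj w2 z1) := by
        rcases O3 with hc | hc
        · exact Or.inr ⟨hc.1, hc.2.1, hc.2.2.1, hc.2.2.2⟩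
        · exact Or.inl ⟨hc.1, hc.2.1, hc.2.2.1, hc.2.2.2⟩
      exact main5 hcub @hT @hQ hsig huv hNu hNv hNx1 hNx2s hvx1 hvx2 hx huy1 huy2 hy huw1 huw2 hw huz2 huz1 hz.symm hcnt ⟨e, n11, n21, n22⟩ ⟨f, m12, m11, m22⟩ O3n
    · -- O2 case (y2, z2)
      have O3n : (G.Adj w1 z1 ∧ G.Adj w2 z2 ∧ ¬G.Adj w1 z2 ∧ ¬G.Adj w2 z1) ∨ (G.Adj w1 z2 ∧ G.Adj w2 z1 ∧ ¬G.Adj w1 z1 ∧ ¬G.Adj w2 z2) := by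
        rcases O3 with hc | hc
        · exact Or.inl ⟨hc.1, hc.2.1, hc.2.2.1, hc.2.2.2⟩
        · exact Or.inr ⟨hc.1, hc.2.1, hc.2.2.1, hc.2.2.2⟩
      exact main5 hcub @hT @hQ hsig huv hNu hNv hNx1 hNx2 hvx1 hvx2 hx huy1 huy2 hy huw1 huw2 hw huz1 huz2 hz hcnt ⟨e, n11, n21, n22⟩ ⟨f, m11, m12, m21⟩ O3n
  · -- O1 case (y2, w1)
    rcases O2 with ⟨f, m12, m21, m22⟩ | ⟨f, m11, m21, m22⟩ | ⟨f, m11, m12, m22⟩ | ⟨f, m11, m12, m21⟩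
    · -- O2 case (y1, z1)
      have O3n : (G.Adj w2 z2 ∧ G.Adj w1 z1 ∧ ¬G.Adj w2 z1 ∧ ¬G.Adj w1 z2) ∨ (G.Adj w2 z1 ∧ G.Adj w1 z2 ∧ ¬G.Adj w2 z2 ∧ ¬G.Adj w1 z1) := by
        rcases O3 with hc | hc
        · exact Or.inl ⟨hc.2.1, hc.1, hc.2.2.2, hc.2.2.1⟩
        · exact Or.inr ⟨hc.2.1, hc.1, hc.2.2.2, hc.2.2.1⟩
      exact main5 hcub @hT @hQ hsig huv hNu hNvs hNx1s hNx2s hvx1 hvx2 hx huy2 huy1 hy.symm huw2 huw1 hw.symm huz2 huz1 hz.symm hcnt ⟨e, n22, n12, n11⟩ ⟨f, m22, m21, m12⟩ O3n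
    · -- O2 case (y1, z2)
      have O3n : (G.Adj w2 z1 ∧ G.Adj w1 z2 ∧ ¬G.Adj w2 z2 ∧ ¬G.Adj w1 z1) ∨ (G.Adj w2 z2 ∧ G.Adj w1 z1 ∧ ¬G.Adj w2 z1 ∧ ¬G.Adj w1 z2) := by
        rcases O3 with hc | hc
        · exact Or.inr ⟨hc.2.1, hc.1, hc.2.2.2, hc.2.2.1⟩
        · exact Or.inl ⟨hc.2.1, hc.1, hc.2.2.2, hc.2.2.1⟩
      exact main5 hcub @hT @hQ hsig huv hNu hNvs hNx1s hNx2 hvx1 hvx2 hx huy2 huy1 hy.symm huw2 huw1 hw.symm huz1 huz2 hz hcnt ⟨e, n22, n12, n11⟩ ⟨f, m21, m22, m11⟩ O3n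
    · -- O2 case (y2, z1)
      exact same_y hNy2 O2v hAx1w1 hAx2z1 e f hvw1 hvz1 hwz11
    · -- O2 case (y2, z2)
      exact same_y hNy2 O2v hAx1w1 hAx2z2 e f hvw1 hvz2 hwz12
  · -- O1 case (y2, w2)
    rcases O2 with ⟨f, m12, m21, m22⟩ | ⟨f, m11, m21, m22⟩ | ⟨f, m11, m12, m22⟩ | ⟨f, m11, m12, m21⟩
    · -- O2 case (y1, z1)
      have O3n : (G.Adj w1 z2 ∧ G.Adj w2 z1 ∧ ¬G.Adj w1 z1 ∧ ¬G.Adj w2 z2) ∨ (G.Adj w1 z1 ∧ G.Adj w2 z2 ∧ ¬G.Adj w1 z2 ∧ ¬G.Adj w2 z1) := by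
        rcases O3 with hc | hc
        · exact Or.inr ⟨hc.1, hc.2.1, hc.2.2.1, hc.2.2.2⟩
        · exact Or.inl ⟨hc.1, hc.2.1, hc.2.2.1, hc.2.2.2⟩
      exact main5 hcub @hT @hQ hsig huv hNu hNvs hNx1 hNx2s hvx1 hvx2 hx huy2 huy1 hy.symm huw1 huw2 hw huz2 huz1 hz.symm hcnt ⟨e, n21, n11, n12⟩ ⟨f, m22, m21, m12⟩ O3n
    · -- O2 case (y1, z2)
      have O3n : (G.Adj w1 z1 ∧ G.Adj w2 z2 ∧ ¬G.Adj w1 z2 ∧ ¬G.Adj w2 z1) ∨ (G.Adj w1 z2 ∧ G.Adj w2 z1 ∧ ¬G.Adj w1 z1 ∧ ¬G.Adj w2 z2) := by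
        rcases O3 with hc | hc
        · exact Or.inl ⟨hc.1, hc.2.1, hc.2.2.1, hc.2.2.2⟩
        · exact Or.inr ⟨hc.1, hc.2.1, hc.2.2.1, hc.2.2.2⟩
      exact main5 hcub @hT @hQ hsig huv hNu hNvs hNx1 hNx2 hvx1 hvx2 hx huy2 huy1 hy.symm huw1 huw2 hw huz1 huz2 hz hcnt ⟨e, n21, n11, n12⟩ ⟨f, m21, m22, m11⟩ O3n
    · -- O2 case (y2, z1)
      exact same_y hNy2 O2v hAx1w2 hAx2z1 e f hvw2 hvz1 hwz21
    · -- O2 case (y2, z2)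
      exact same_y hNy2 O2v hAx1w2 hAx2z2 e f hvw2 hvz2 hwz22

end Stmt18


/-- There is no finite cubic girth-regular graph of girth `4` whose
signature `(a, b, c)` has `c = 3`; in particular the signatures `(1, 2, 3)` and
`(2, 3, 3)` do not occur at girth `4`, and `(2, 3, 3)` does not occur at girth `5`.
(Here `3`-regularity is expressed by every vertex having exactly `3` neighbours.) -/
theorem stmt18 :
    (¬ ∃ (V : Type) (inst : Fintype V) (G : SimpleGraph V) (a b : ℕ),
        (∀ v : V, (G.neighborSet v).ncard = 3) ∧ G.egirth = (4 : ℕ∞) ∧ a ≤ b ∧ b ≤ 3 ∧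
        ∀ v : V, @vertexSignature V inst G 4 v = {a, b, 3}) ∧
    (¬ ∃ (V : Type) (inst : Fintype V) (G : SimpleGraph V),
        (∀ v : V, (G.neighborSet v).ncard = 3) ∧ G.egirth = (4 : ℕ∞) ∧
        ∀ v : V, @vertexSignature V inst G 4 v = {1, 2, 3}) ∧
    (¬ ∃ (V : Type) (inst : Fintype V) (G : SimpleGraph V),
        (∀ v : V, (G.neighborSet v).ncard = 3) ∧ G.egirth = (4 : ℕ∞) ∧
        ∀ v : V, @vertexSignature V inst G 4 v = {2, 3, 3}) ∧
    (¬ ∃ (V : Type) (inst : Fintype V) (G : SimpleGraph V),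
        (∀ v : V, (G.neighborSet v).ncard = 3) ∧ G.egirth = (5 : ℕ∞) ∧
        ∀ v : V, @vertexSignature V inst G 5 v = {2, 3, 3}) := by
  have part1 : ¬ ∃ (V : Type) (inst : Fintype V) (G : SimpleGraph V) (a b : ℕ),
      (∀ v : V, (G.neighborSet v).ncard = 3) ∧ G.egirth = (4 : ℕ∞) ∧ a ≤ b ∧ b ≤ 3 ∧
      ∀ v : V, @vertexSignature V inst G 4 v = {a, b, 3} := by
    rintro ⟨V, inst, G, a, b, hcub, hg, -, -, hsig⟩
    exact Stmt18.girth4_main hcub hg hsig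
  refine ⟨part1, ?_, ?_, ?_⟩
  · rintro ⟨V, inst, G, hcub, hg, hsig⟩
    exact part1 ⟨V, inst, G, 1, 2, hcub, hg, by norm_num, by norm_num, hsig⟩
  · rintro ⟨V, inst, G, hcub, hg, hsig⟩
    exact part1 ⟨V, inst, G, 2, 3, hcub, hg, by norm_num, by norm_num, hsig⟩
  · rintro ⟨V, inst, G, hcub, hg, hsig⟩
    exact Stmt18.girth5_main hcub hg hsig
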